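/- arXiv:1211.0579 — 5 statements merged into one kernel-verified Lean document; each statement's English description precedes it below -/
import Mathlib

section
/- For every pencil of alternating bilinear forms on a finite-dimensional complex vector space there exists a bi-Lagrangian subspace: the rank r of the pencil is even, and there exists a subspace U ⊆ V such that A(u,u′) = 0 and B(u,u′) = 0 for all u, u′ ∈ U and 2·dim U = 2·dim V − r. -/
open Module LinearMap
set_option linter.unusedSectionVars false
set_option maxHeartbeats 1000000

/-- The rank of a bilinear form `C` on `V`: `dim V - dim (ker C)`. -/
noncomputable def formRank {V : Type*} [AddCommGroup V] [Module ℂ V]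
    (C : V →ₗ[ℂ] V →ₗ[ℂ] ℂ) : ℕ :=
  Module.finrank ℂ V - Module.finrank ℂ (LinearMap.ker C)

section Basics

variable {V : Type*} [AddCommGroup V] [Module ℂ V] [FiniteDimensional ℂ V]

lemma formRank_eq_rank (C : V →ₗ[ℂ] V →ₗ[ℂ] ℂ) :
    formRank C = finrank ℂ (LinearMap.range C) := by
  have h := LinearMap.finrank_range_add_finrank_ker C
  have h2 : finrank ℂ (LinearMap.ker C) ≤ finrank ℂ V := Submodule.finrank_le _
  unfold formRank; omega

lemma formRank_le (C : V →ₗ[ℂ] V →ₗ[ℂ] ℂ) : formRank C ≤ finrank ℂ V := Nat.sub_le _ _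

lemma formRank_add_ker (C : V →ₗ[ℂ] V →ₗ[ℂ] ℂ) :
    formRank C + finrank ℂ (LinearMap.ker C) = finrank ℂ V := by
  have h := LinearMap.finrank_range_add_finrank_ker C
  rw [formRank_eq_rank]; omega

lemma formRank_smul {a : ℂ} (ha : a ≠ 0) (C : V →ₗ[ℂ] V →ₗ[ℂ] ℂ) :
    formRank (a • C) = formRank C := by
  unfold formRank; rw [LinearMap.ker_smul _ _ ha]

lemma skew {C : V →ₗ[ℂ] V →ₗ[ℂ] ℂ} (hC : ∀ v, C v v = 0) (v w : V) :
    C v w = - C w v := by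
  have h := hC (v + w)
  simp only [map_add, LinearMap.add_apply, hC v, hC w] at h
  linear_combination h

lemma formRank_zero : formRank (0 : V →ₗ[ℂ] V →ₗ[ℂ] ℂ) = 0 := by
  unfold formRank
  rw [LinearMap.ker_zero, finrank_top]
  omega

end Basics

section DetRank
variable {V : Type*} [AddCommGroup V] [Module ℂ V] [FiniteDimensional ℂ V]

lemma formRank_eq_rank' (C : V →ₗ[ℂ] V →ₗ[ℂ] ℂ) :
    formRank C = finrank ℂ (LinearMap.range C) := by
  have h := LinearMap.finrank_range_add_finrank_ker C
  have h2 : finrank ℂ (LinearMap.ker C) ≤ finrank ℂ V := Submodule.finrank_le _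
  unfold formRank; omega

/-- independent functionals give a surjective `pi` map. -/
lemma pi_surj {s : ℕ} (g : Fin s → (V →ₗ[ℂ] ℂ)) (hg : LinearIndependent ℂ g) :
    Function.Surjective (LinearMap.pi g) := by
  rw [← LinearMap.dualMap_injective_iff]
  rw [← LinearMap.ker_eq_bot]
  have hrange : ∀ i, g i ∈ LinearMap.range (LinearMap.pi g).dualMap := by
    intro i
    exact ⟨LinearMap.proj i, LinearMap.proj_pi g i⟩
  have hsp : Submodule.span ℂ (Set.range g) ≤ LinearMap.range (LinearMap.pi g).dualMap := by
    rw [Submodule.span_le]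
    rintro x ⟨i, rfl⟩; exact hrange i
  have h1 : s ≤ finrank ℂ (LinearMap.range (LinearMap.pi g).dualMap) := by
    have := finrank_span_eq_card hg
    calc s = Fintype.card (Fin s) := (Fintype.card_fin s).symm
    _ = finrank ℂ (Submodule.span ℂ (Set.range g)) := (finrank_span_eq_card hg).symm
    _ ≤ _ := Submodule.finrank_mono hsp
  have h2 := LinearMap.finrank_range_add_finrank_ker (LinearMap.pi g).dualMap
  have h3 : finrank ℂ (Module.Dual ℂ (Fin s → ℂ)) = s := by
    rw [Subspace.dual_finrank_eq, Module.finrank_pi]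
    exact Fintype.card_fin s
  rw [h3] at h2
  have : finrank ℂ (LinearMap.ker (LinearMap.pi g).dualMap) = 0 := by omega
  exact Submodule.finrank_eq_zero.mp this

lemma det_le_rank {ι : Type*} [Fintype ι] [DecidableEq ι] (C : V →ₗ[ℂ] V →ₗ[ℂ] ℂ)
    (v w : ι → V) (h : (Matrix.of fun i j => C (v i) (w j)).det ≠ 0) :
    Fintype.card ι ≤ formRank C := by
  classical
  set Φ : V →ₗ[ℂ] (ι → ℂ) := LinearMap.pi (fun j => C.flip (w j)) with hΦ
  have hfact : ∀ x : V, Φ x = (fun j => C x (w j)) := fun x => rfl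
  -- rows of the matrix are Φ (v i), independent since det ≠ 0
  have hrows : LinearIndependent ℂ (fun i => Φ (v i)) := by
    have : IsUnit (Matrix.of fun i j => C (v i) (w j)) := by
      rwa [Matrix.isUnit_iff_isUnit_det, isUnit_iff_ne_zero]
    have h2 := Matrix.linearIndependent_rows_iff_isUnit.mpr this
    exact h2
  have h1 : Fintype.card ι ≤ finrank ℂ (LinearMap.range Φ) := by
    have hsp : Submodule.span ℂ (Set.range fun i => Φ (v i)) ≤ LinearMap.range Φ := by
      rw [Submodule.span_le]; rintro x ⟨i, rfl⟩; exact ⟨v i, rfl⟩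
    calc Fintype.card ι = finrank ℂ (Submodule.span ℂ (Set.range fun i => Φ (v i))) :=
          (finrank_span_eq_card hrows).symm
    _ ≤ _ := Submodule.finrank_mono hsp
  -- Φ factors through C
  have hcomp : Φ = (LinearMap.pi (fun j => LinearMap.applyₗ (w j))).comp C := by
    apply LinearMap.ext; intro x; funext j; rfl
  have h2 : finrank ℂ (LinearMap.range Φ) ≤ finrank ℂ (LinearMap.range C) := by
    rw [hcomp, LinearMap.range_comp]
    exact Submodule.finrank_map_le _ _
  rw [formRank_eq_rank']
  omega

lemma rank_le_det (C : V →ₗ[ℂ] V →ₗ[ℂ] ℂ) (k : ℕ) (h : k ≤ formRank C) :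
    ∃ v w : Fin k → V, (Matrix.of fun i j => C (v i) (w j)).det ≠ 0 := by
  classical
  rw [formRank_eq_rank'] at h
  set R := LinearMap.range C with hR
  let b : Basis (Fin (finrank ℂ R)) ℂ R := Module.finBasis ℂ R
  let emb : Fin k → Fin (finrank ℂ R) := fun i => Fin.castLE h i
  have hembinj : Function.Injective emb := fun a b hab => by
    simpa [emb, Fin.ext_iff] using hab
  let fam : Fin k → (V →ₗ[ℂ] ℂ) := fun i => ((b (emb i)) : V →ₗ[ℂ] ℂ)
  have hfam : LinearIndependent ℂ fam := by
    have h1 : LinearIndependent ℂ (fun i => b (emb i)) := b.linearIndependent.comp emb hembinj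
    exact h1.map' R.subtype (Submodule.ker_subtype R)
  -- each fam i is in range C
  have hmem : ∀ i, ∃ x : V, C x = fam i := by
    intro i
    have : (b (emb i) : V →ₗ[ℂ] ℂ) ∈ R := (b (emb i)).2
    exact this
  choose v hv using hmem
  have hsurj := pi_surj fam hfam
  have hw : ∀ j : Fin k, ∃ x : V, LinearMap.pi fam x = Pi.single j 1 := fun j => hsurj _
  choose w hw using hw
  refine ⟨v, w, ?_⟩
  have hmat : (Matrix.of fun i j => C (v i) (w j)) = (1 : Matrix (Fin k) (Fin k) ℂ) := by
    ext i j
    have : C (v i) (w j) = fam i (w j) := by rw [hv]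
    rw [Matrix.of_apply, this]
    have h2 : fam i (w j) = (LinearMap.pi fam (w j)) i := rfl
    rw [h2, hw j]
    simp [Matrix.one_apply, Pi.single_apply, eq_comm]
  rw [hmat, Matrix.det_one]
  exact one_ne_zero

end DetRank

section Generic
variable {V : Type*} [AddCommGroup V] [Module ℂ V] [FiniteDimensional ℂ V]

/-- Generic rank attainment: some nonzero `l` has `rank (M + l • N) ≥ rank M`. -/
lemma generic_rank (M N : V →ₗ[ℂ] V →ₗ[ℂ] ℂ) :
    ∃ l : ℂ, l ≠ 0 ∧ formRank M ≤ formRank (M + l • N) := by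
  classical
  obtain ⟨v, w, hdet⟩ := rank_le_det M (formRank M) le_rfl
  set P : Matrix (Fin (formRank M)) (Fin (formRank M)) (Polynomial ℂ) :=
    Matrix.of fun i j => Polynomial.C (M (v i) (w j)) + Polynomial.X * Polynomial.C (N (v i) (w j))
    with hP
  have heval : ∀ t : ℂ, Polynomial.eval t P.det
      = (Matrix.of fun i j => M (v i) (w j) + t * N (v i) (w j)).det := by
    intro t
    have := RingHom.map_det (Polynomial.evalRingHom t) P
    rw [Polynomial.coe_evalRingHom] at this
    rw [this]
    congr 1
    ext i j
    simp [hP]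
    ring
  have hP0 : P.det ≠ 0 := by
    intro hzero
    apply hdet
    have := heval 0
    rw [hzero] at this
    simp only [Polynomial.eval_zero] at this
    rw [show (Matrix.of fun i j => M (v i) (w j)) = Matrix.of fun i j => M (v i) (w j) + 0 * N (v i) (w j) by ext i j; ring]
    exact this.symm
  have hfin : ({x : ℂ | P.det.IsRoot x} ∪ {0}).Finite :=
    (Polynomial.finite_setOf_isRoot hP0).union (Set.finite_singleton 0)
  obtain ⟨l, hl⟩ := hfin.infinite_compl.nonempty
  simp only [Set.mem_compl_iff, Set.mem_union, Set.mem_setOf_eq, Set.mem_singleton_iff,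
    not_or] at hl
  refine ⟨l, hl.2, ?_⟩
  have hdl : (Matrix.of fun i j => (M + l • N) (v i) (w j)).det ≠ 0 := by
    have h1 : (Matrix.of fun i j => (M + l • N) (v i) (w j))
        = Matrix.of fun i j => M (v i) (w j) + l * N (v i) (w j) := by
      ext i j; simp
    rw [h1, ← heval l]
    exact hl.1
  have := det_le_rank (M + l • N) v w hdl
  simpa using this

end Generic

section Isotropy
variable {V : Type*} [AddCommGroup V] [Module ℂ V] [FiniteDimensional ℂ V]

open Polynomial in
/-- The kernel of a maximal-rank member of a pencil is isotropic for the whole pencil. -/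
lemma ker_isotropic (A B : V →ₗ[ℂ] V →ₗ[ℂ] ℂ) (hA : ∀ x, A x x = 0) (hB : ∀ x, B x x = 0)
    (r : ℕ) (hrA : formRank A = r)
    (hle : ∀ l : ℂ, formRank (A + l • B) ≤ r) :
    ∀ u ∈ LinearMap.ker A, ∀ v ∈ LinearMap.ker A, B u v = 0 := by
  classical
  intro u hu v hv
  by_contra hBuv
  obtain ⟨vs, ws, hdet⟩ := rank_le_det A r (le_of_eq hrA.symm)
  set uv : Fin 2 → V := ![u, v] with huv_def
  have huv : ∀ a : Fin 2, ∀ x : V, A (uv a) x = 0 := by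
    intro a x
    fin_cases a
    · simpa [huv_def] using LinearMap.congr_fun (LinearMap.mem_ker.mp hu) x
    · simpa [huv_def] using LinearMap.congr_fun (LinearMap.mem_ker.mp hv) x
  have huv' : ∀ a : Fin 2, ∀ x : V, A x (uv a) = 0 := by
    intro a x; rw [skew hA]; rw [huv a x]; ring
  set vv : Fin 2 ⊕ Fin r → V := Sum.elim uv vs with hvv
  set ww : Fin 2 ⊕ Fin r → V := Sum.elim uv ws with hww
  set Q11 : Matrix (Fin 2) (Fin 2) ℂ[X] := Matrix.of fun i j => C (B (uv i) (uv j)) with hQ11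
  set Q12 : Matrix (Fin 2) (Fin r) ℂ[X] := Matrix.of fun i j => C (B (uv i) (ws j)) with hQ12
  set Q21 : Matrix (Fin r) (Fin 2) ℂ[X] :=
    Matrix.of fun i j => X * C (B (vs i) (uv j)) with hQ21
  set Q22 : Matrix (Fin r) (Fin r) ℂ[X] :=
    Matrix.of fun i j => C (A (vs i) (ws j)) + X * C (B (vs i) (ws j)) with hQ22
  set Q : Matrix (Fin 2 ⊕ Fin r) (Fin 2 ⊕ Fin r) ℂ[X] := Matrix.fromBlocks Q11 Q12 Q21 Q22
    with hQ
  set P : Matrix (Fin 2 ⊕ Fin r) (Fin 2 ⊕ Fin r) ℂ[X] :=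
    Matrix.of fun i j => C (A (vv i) (ww j)) + X * C (B (vv i) (ww j)) with hP
  have hfactor : P = Matrix.of fun i j =>
      (Sum.elim (fun _ : Fin 2 => (X : ℂ[X])) (fun _ : Fin r => (1 : ℂ[X])) i) * Q i j := by
    ext i j
    rcases i with a | a <;> rcases j with b | b <;>
      simp [hP, hQ, hvv, hww, Matrix.fromBlocks, hQ11, hQ12, hQ21, hQ22, huv, huv'] <;>
      ring
  have hdetP : P.det = X ^ 2 * Q.det := by
    rw [hfactor, Matrix.det_mul_column, Fintype.prod_sum_type]
    simp [Finset.prod_const]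
  have hQdet : Q.det ≠ 0 := by
    intro h0
    have hev := RingHom.map_det (Polynomial.evalRingHom 0) Q
    rw [h0] at hev
    simp only [map_zero] at hev
    -- compute the evaluated determinant
    have hmap : (Polynomial.evalRingHom 0).mapMatrix Q =
        Matrix.fromBlocks (Matrix.of fun i j => B (uv i) (uv j))
          (Matrix.of fun i j => B (uv i) (ws j)) 0
          (Matrix.of fun i j => A (vs i) (ws j)) := by
      ext i j
      rcases i with a | a <;> rcases j with b | b <;>
        simp [hQ, hQ11, hQ12, hQ21, hQ22]
    rw [hmap, Matrix.det_fromBlocks_zero₂₁] at hev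
    have h2 : (Matrix.of fun i j => B (uv i) (uv j)).det = B u v * B u v := by
      rw [Matrix.det_fin_two]
      simp [huv_def]
      rw [hB u, hB v, skew hB v u]
      ring
    rw [h2] at hev
    rcases mul_eq_zero.mp hev.symm with h3 | h3
    · exact hBuv (by rcases mul_eq_zero.mp h3 with h4 | h4 <;> exact h4)
    · exact hdet h3
  have hPdet : P.det ≠ 0 := by
    rw [hdetP]
    exact mul_ne_zero (pow_ne_zero 2 Polynomial.X_ne_zero) hQdet
  obtain ⟨t, ht⟩ := (Polynomial.finite_setOf_isRoot hPdet).infinite_compl.nonempty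
  simp only [Set.mem_compl_iff, Set.mem_setOf_eq, Polynomial.IsRoot] at ht
  have hS : (Matrix.of fun i j => (A + t • B) (vv i) (ww j)).det ≠ 0 := by
    have hev := RingHom.map_det (Polynomial.evalRingHom t) P
    have hm : (Polynomial.evalRingHom t).mapMatrix P
        = Matrix.of fun i j => (A + t • B) (vv i) (ww j) := by
      ext i j
      simp [hP]
      ring
    rw [hm] at hev
    rw [← hev]
    exact fun hc => ht (by simpa using hc)
  have hcard := det_le_rank (A + t • B) vv ww hS
  have hle' := hle t
  simp only [Fintype.card_sum, Fintype.card_fin] at hcard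
  omega

end Isotropy

section Perp
variable {V : Type*} [AddCommGroup V] [Module ℂ V]

/-- the orthogonal complement of `K` with respect to the form `C`. -/
def perpF (C : V →ₗ[ℂ] V →ₗ[ℂ] ℂ) (K : Submodule ℂ V) : Submodule ℂ V where
  carrier := {v | ∀ k ∈ K, C v k = 0}
  add_mem' := by
    intro a b ha hb k hk
    simp only [Set.mem_setOf_eq] at *
    rw [map_add, LinearMap.add_apply, ha k hk, hb k hk, add_zero]
  zero_mem' := by
    intro k hk
    simp
  smul_mem' := by
    intro c a ha k hk
    simp only [Set.mem_setOf_eq] at *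
    rw [map_smul, LinearMap.smul_apply, ha k hk, smul_zero]

lemma mem_perpF {C : V →ₗ[ℂ] V →ₗ[ℂ] ℂ} {K : Submodule ℂ V} {v : V} :
    v ∈ perpF C K ↔ ∀ k ∈ K, C v k = 0 := Iff.rfl

variable [FiniteDimensional ℂ V]

lemma perp_rank (C : V →ₗ[ℂ] V →ₗ[ℂ] ℂ) (hC : ∀ x, C x x = 0) (K : Submodule ℂ V)
    (hK : ∀ k ∈ K, ∀ k' ∈ K, C k k' = 0) :
    formRank (C.compl₁₂ (perpF C K).subtype (perpF C K).subtype)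
      + 2 * (finrank ℂ V - finrank ℂ (perpF C K)) = formRank C := by
  classical
  set n := finrank ℂ V with hn
  set P := perpF C K with hPdef
  set γ : V →ₗ[ℂ] (K →ₗ[ℂ] ℂ) := C.compl₂ K.subtype with hγ
  have hγapp : ∀ (x : V) (k : K), γ x k = C x (k : V) := fun x k => rfl
  have hkerγ : LinearMap.ker γ = P := by
    ext v
    simp only [LinearMap.mem_ker, hPdef, mem_perpF]
    constructor
    · intro h k hk
      have := LinearMap.congr_fun h ⟨k, hk⟩
      simpa [hγapp] using this
    · intro h
      apply LinearMap.ext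
      intro k
      simpa [hγapp] using h k k.2
  set s := finrank ℂ (LinearMap.range γ) with hs
  have hPs : finrank ℂ P + s = n := by
    have := LinearMap.finrank_range_add_finrank_ker γ
    rw [hkerγ] at this
    omega
  -- choose the `w` family
  set bas : Basis (Fin s) ℂ (LinearMap.range γ) := Module.finBasis ℂ (LinearMap.range γ) with hbas
  have hwex : ∀ i : Fin s, ∃ x : V, γ x = (bas i : K →ₗ[ℂ] ℂ) := fun i => (bas i).2
  choose w hw using hwex
  -- the dual family `kv` in `K`
  have hfam : LinearIndependent ℂ (fun i => ((bas i : K →ₗ[ℂ] ℂ))) :=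
    bas.linearIndependent.map' (LinearMap.range γ).subtype (Submodule.ker_subtype _)
  have hsurj := pi_surj _ hfam
  have hkkex : ∀ j : Fin s, ∃ k : K,
      (LinearMap.pi (fun i => ((bas i : K →ₗ[ℂ] ℂ)))) k = Pi.single j 1 := fun j => hsurj _
  choose kk hkk using hkkex
  set kv : Fin s → V := fun j => (kk j : V) with hkv
  have hkvK : ∀ j, kv j ∈ K := fun j => (kk j).2
  have pairing : ∀ i j, C (w i) (kv j) = if i = j then 1 else 0 := by
    intro i j
    have h1 : C (w i) (kv j) = γ (w i) (kk j) := rfl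
    rw [h1, hw]
    have h2 : (bas i : K →ₗ[ℂ] ℂ) (kk j)
        = (LinearMap.pi (fun i => ((bas i : K →ₗ[ℂ] ℂ)))) (kk j) i := rfl
    rw [h2, hkk j, Pi.single_apply]
  set N := LinearMap.ker C with hN
  set Ks := Submodule.span ℂ (Set.range kv) with hKs
  set W1 := Submodule.span ℂ (Set.range w) with hW1
  have hKP : K ≤ P := fun k hk => by
    rw [hPdef, mem_perpF]; exact fun k' hk' => hK k hk k' hk'
  have hNP : N ≤ P := fun v hv => by
    rw [hPdef, mem_perpF]
    intro k hk
    exact LinearMap.congr_fun (LinearMap.mem_ker.mp hv) k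
  have hKsK : Ks ≤ K := by
    rw [hKs, Submodule.span_le]
    rintro x ⟨j, rfl⟩
    exact hkvK j
  -- linear independence of kv and w
  have hkvind : LinearIndependent ℂ kv := by
    rw [Fintype.linearIndependent_iff]
    intro g hg j
    have h1 := congrArg (fun z => C (w j) z) hg
    simp only [map_sum, map_smul, smul_eq_mul, map_zero] at h1
    rw [Finset.sum_congr rfl (fun i _ => by rw [pairing j i])] at h1
    simpa using h1
  have hwind : LinearIndependent ℂ w := by
    rw [Fintype.linearIndependent_iff]
    intro g hg j
    have h1 := congrArg (fun z => C z (kv j)) hg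
    simp only [map_sum, LinearMap.sum_apply, map_smul, LinearMap.smul_apply, smul_eq_mul,
      map_zero, LinearMap.zero_apply] at h1
    rw [Finset.sum_congr rfl (fun i _ => by rw [pairing i j])] at h1
    simpa using h1
  have hKsdim : finrank ℂ Ks = s := by
    rw [hKs, finrank_span_eq_card hkvind, Fintype.card_fin]
  have hW1dim : finrank ℂ W1 = s := by
    rw [hW1, finrank_span_eq_card hwind, Fintype.card_fin]
  have hPW1 : P ⊓ W1 = ⊥ := by
    rw [eq_bot_iff]
    rintro x ⟨hxP, hxW⟩
    obtain ⟨g, rfl⟩ := Submodule.mem_span_range_iff_exists_fun ℂ |>.mp hxW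
    have hg : ∀ j, g j = 0 := by
      intro j
      have h0 : C (∑ i, g i • w i) (kv j) = 0 := hxP (kv j) (hkvK j)
      simp only [map_sum, LinearMap.sum_apply, map_smul, LinearMap.smul_apply, smul_eq_mul] at h0
      rw [Finset.sum_congr rfl (fun i _ => by rw [pairing i j])] at h0
      simpa using h0
    simp only [Submodule.mem_bot]
    rw [Finset.sum_congr rfl (fun i _ => by rw [hg i, zero_smul])]
    simp
  have htop : P ⊔ W1 = ⊤ := by
    apply Submodule.eq_top_of_finrank_eq
    have hsum := Submodule.finrank_sup_add_finrank_inf_eq P W1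
    rw [hPW1] at hsum
    simp only [finrank_bot, add_zero] at hsum
    omega
  set C₁ := C.compl₁₂ P.subtype P.subtype with hC₁
  have hC₁app : ∀ (x y : P), C₁ x y = C (x : V) (y : V) := fun x y => rfl
  have hker₁ : LinearMap.ker C₁ = Submodule.comap P.subtype (N ⊔ Ks) := by
    ext x
    simp only [LinearMap.mem_ker, Submodule.mem_comap, Submodule.coe_subtype]
    constructor
    · intro hx
      have hxy : ∀ y : P, C (x : V) (y : V) = 0 := by
        intro y
        have := LinearMap.congr_fun hx y
        simpa [hC₁app] using this
      set c : Fin s → ℂ := fun j => C (x : V) (w j) with hc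
      set x' : V := (x : V) + ∑ i, c i • kv i with hx'
      have hPkv : ∀ (p : V), p ∈ P → ∀ i, C p (kv i) = 0 := fun p hp i => hp (kv i) (hkvK i)
      have hx'P : ∀ p : V, p ∈ P → C x' p = 0 := by
        intro p hp
        rw [hx']
        simp only [map_add, map_sum, map_smul, LinearMap.add_apply, LinearMap.sum_apply,
          LinearMap.smul_apply, smul_eq_mul]
        rw [hxy ⟨p, hp⟩]
        rw [Finset.sum_congr rfl (fun i _ => by
          rw [skew hC (kv i) p, hPkv p hp i, neg_zero, mul_zero])]
        simp
      have hx'w : ∀ j, C x' (w j) = 0 := by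
        intro j
        rw [hx']
        simp only [map_add, map_sum, map_smul, LinearMap.add_apply, LinearMap.sum_apply,
          LinearMap.smul_apply, smul_eq_mul]
        rw [Finset.sum_congr rfl (fun i _ => by
          rw [skew hC (kv i) (w j), pairing j i])]
        simp only [mul_neg, mul_ite, mul_one, mul_zero]
        rw [show (∑ i : Fin s, -if j = i then c i else 0)
            = -∑ i : Fin s, if j = i then c i else 0 by
          rw [Finset.sum_neg_distrib]]
        rw [Finset.sum_ite_eq]
        simp [hc]
      have hx'N : x' ∈ N := by
        rw [hN, LinearMap.mem_ker]
        apply LinearMap.ext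
        intro z
        have hz : z ∈ P ⊔ W1 := htop ▸ Submodule.mem_top
        obtain ⟨p, hp, y, hy, rfl⟩ := Submodule.mem_sup.mp hz
        obtain ⟨g, rfl⟩ := Submodule.mem_span_range_iff_exists_fun ℂ |>.mp hy
        simp only [map_add, LinearMap.zero_apply, LinearMap.add_apply]
        rw [hx'P p hp]
        simp only [map_sum, map_smul, smul_eq_mul]
        rw [Finset.sum_congr rfl (fun j _ => by rw [hx'w j, mul_zero])]
        simp
      have : (x : V) = x' + (- ∑ i, c i • kv i) := by rw [hx']; abel
      rw [this]
      apply Submodule.add_mem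
      · exact Submodule.mem_sup_left hx'N
      · apply Submodule.mem_sup_right
        apply Submodule.neg_mem
        apply Submodule.sum_mem
        intro i _
        exact Submodule.smul_mem _ _ (Submodule.subset_span ⟨i, rfl⟩)
    · intro hx
      obtain ⟨a, ha, b, hb, hab⟩ := Submodule.mem_sup.mp hx
      apply LinearMap.ext
      intro y
      rw [hC₁app, ← hab]
      simp only [map_add, LinearMap.add_apply, LinearMap.zero_apply]
      have h1 : C a (y : V) = 0 := LinearMap.congr_fun (LinearMap.mem_ker.mp ha) _
      have h2 : C b (y : V) = 0 := by
        rw [skew hC]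
        rw [y.2 b (hKsK hb)]
        ring
      rw [h1, h2, add_zero]
  have hNKs : N ⊓ Ks = ⊥ := by
    rw [eq_bot_iff]
    rintro x ⟨hxN, hxKs⟩
    obtain ⟨g, rfl⟩ := Submodule.mem_span_range_iff_exists_fun ℂ |>.mp hxKs
    have hg : ∀ j, g j = 0 := by
      intro j
      have h0 : C (w j) (∑ i, g i • kv i) = 0 := by
        rw [skew hC]
        rw [LinearMap.congr_fun (LinearMap.mem_ker.mp hxN) (w j)]
        simp
      simp only [map_sum, map_smul, smul_eq_mul] at h0
      rw [Finset.sum_congr rfl (fun i _ => by rw [pairing j i])] at h0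
      simpa using h0
    simp only [Submodule.mem_bot]
    rw [Finset.sum_congr rfl (fun i _ => by rw [hg i, zero_smul])]
    simp
  -- dimension count
  have hle : N ⊔ Ks ≤ P := sup_le hNP (le_trans hKsK hKP)
  have hdim1 : finrank ℂ (LinearMap.ker C₁) = finrank ℂ ((N ⊔ Ks : Submodule ℂ V)) := by
    rw [hker₁]
    exact LinearEquiv.finrank_eq (Submodule.comapSubtypeEquivOfLe hle)
  have hdim2 : finrank ℂ ((N ⊔ Ks : Submodule ℂ V)) = finrank ℂ N + s := by
    have hsum := Submodule.finrank_sup_add_finrank_inf_eq N Ks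
    rw [hNKs] at hsum
    simp only [finrank_bot, add_zero] at hsum
    omega
  have e1 := formRank_add_ker C₁
  have e2 := formRank_add_ker C
  rw [← hn] at e2
  have e4 : finrank ℂ (LinearMap.ker C₁) ≤ finrank ℂ P := Submodule.finrank_le _
  rw [hN] at hdim2
  have e5 : finrank ℂ (LinearMap.ker C₁) = finrank ℂ (LinearMap.ker C) + s :=
    hdim1.trans hdim2
  omega

end Perp

section Compl
variable {V : Type*} [AddCommGroup V] [Module ℂ V] [FiniteDimensional ℂ V]
variable {V' : Type*} [AddCommGroup V'] [Module ℂ V']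

lemma compl₁₂_add (A B : V →ₗ[ℂ] V →ₗ[ℂ] ℂ) (f g : V' →ₗ[ℂ] V) :
    (A + B).compl₁₂ f g = A.compl₁₂ f g + B.compl₁₂ f g := by
  apply LinearMap.ext; intro x; apply LinearMap.ext; intro y
  simp [LinearMap.compl₁₂_apply]

lemma compl₁₂_smul (a : ℂ) (A : V →ₗ[ℂ] V →ₗ[ℂ] ℂ) (f g : V' →ₗ[ℂ] V) :
    (a • A).compl₁₂ f g = a • (A.compl₁₂ f g) := by
  apply LinearMap.ext; intro x; apply LinearMap.ext; intro y
  simp [LinearMap.compl₁₂_apply]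

lemma compl₁₂_compl₁₂ {V'' : Type*} [AddCommGroup V''] [Module ℂ V'']
    (A : V →ₗ[ℂ] V →ₗ[ℂ] ℂ) (f : V' →ₗ[ℂ] V) (g : V'' →ₗ[ℂ] V') :
    (A.compl₁₂ f f).compl₁₂ g g = A.compl₁₂ (f ∘ₗ g) (f ∘ₗ g) := by
  apply LinearMap.ext; intro x; apply LinearMap.ext; intro y
  simp [LinearMap.compl₁₂_apply]

/-- Restricting a form to a complement of a subspace of its kernel preserves the rank. -/
lemma rank_compl (C : V →ₗ[ℂ] V →ₗ[ℂ] ℂ) (hC : ∀ x, C x x = 0) (K D : Submodule ℂ V)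
    (h1 : IsCompl K D) (h2 : K ≤ LinearMap.ker C) :
    formRank (C.compl₁₂ D.subtype D.subtype) = formRank C := by
  set C₁ := C.compl₁₂ D.subtype D.subtype with hC₁
  have hker : LinearMap.ker C₁ = Submodule.comap D.subtype (LinearMap.ker C) := by
    ext d
    simp only [LinearMap.mem_ker, Submodule.mem_comap, Submodule.coe_subtype]
    constructor
    · intro hd
      apply LinearMap.ext
      intro v
      have hv : v ∈ K ⊔ D := by rw [h1.sup_eq_top]; exact Submodule.mem_top
      obtain ⟨k, hk, d', hd', rfl⟩ := Submodule.mem_sup.mp hv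
      have hCk : C (d : V) k = 0 := by
        rw [skew hC]
        rw [LinearMap.congr_fun (LinearMap.mem_ker.mp (h2 hk)) (d : V)]
        simp
      have hCd' : C (d : V) d' = 0 := by
        have := LinearMap.congr_fun hd (⟨d', hd'⟩ : D)
        simpa [hC₁] using this
      simp [map_add, hCk, hCd']
    · intro hd
      apply LinearMap.ext
      intro y
      have := LinearMap.congr_fun (LinearMap.mem_ker.mp hd) (y : V)
      simpa [hC₁] using this
  have hd1 : finrank ℂ (LinearMap.ker C₁) = finrank ℂ ((LinearMap.ker C ⊓ D : Submodule ℂ V)) := by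
    rw [hker]
    have e := Submodule.equivMapOfInjective D.subtype (Submodule.injective_subtype D)
      (Submodule.comap D.subtype (LinearMap.ker C))
    rw [Submodule.map_comap_subtype, inf_comm D (LinearMap.ker C)] at e
    exact e.finrank_eq
  have hsup : K ⊔ (LinearMap.ker C ⊓ D) = LinearMap.ker C := by
    apply le_antisymm
    · exact sup_le h2 inf_le_left
    · intro v hv
      have hv' : v ∈ K ⊔ D := by rw [h1.sup_eq_top]; exact Submodule.mem_top
      obtain ⟨k, hk, d, hd, rfl⟩ := Submodule.mem_sup.mp hv'
      have hdker : d ∈ LinearMap.ker C := by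
        have : d = (k + d) - k := by abel
        rw [this]
        exact Submodule.sub_mem _ hv (h2 hk)
      exact Submodule.add_mem _ (Submodule.mem_sup_left hk)
        (Submodule.mem_sup_right ⟨hdker, hd⟩)
  have hdisj : K ⊓ (LinearMap.ker C ⊓ D) = ⊥ := by
    rw [eq_bot_iff]
    rintro x ⟨hxK, hx2⟩
    exact h1.disjoint.le_bot (Submodule.mem_inf.mpr ⟨hxK, (Submodule.mem_inf.mp hx2).2⟩)
  have hsum := Submodule.finrank_sup_add_finrank_inf_eq K (LinearMap.ker C ⊓ D)
  rw [hsup, hdisj] at hsum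
  simp only [finrank_bot, add_zero] at hsum
  have e1 := formRank_add_ker C₁
  have e2 := formRank_add_ker C
  have e3 := Submodule.finrank_add_eq_of_isCompl h1
  have e4 : finrank ℂ ((LinearMap.ker C ⊓ D : Submodule ℂ V)) ≤ finrank ℂ D :=
    Submodule.finrank_mono inf_le_right
  omega

end Compl

section Key
universe u

/-- The induction statement. -/
def IH (n : ℕ) : Prop :=
  ∀ (W : Type u) [AddCommGroup W] [Module ℂ W] [FiniteDimensional ℂ W],
    Module.finrank ℂ W ≤ n →
    ∀ (A B : W →ₗ[ℂ] W →ₗ[ℂ] ℂ), (∀ x, A x x = 0) → (∀ x, B x x = 0) →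
    ∀ r : ℕ, (∀ a b : ℂ, formRank (a • A + b • B) ≤ r) →
    (∃ a b : ℂ, formRank (a • A + b • B) = r) →
    ∃ U : Submodule ℂ W,
      (∀ u ∈ U, ∀ u' ∈ U, A u u' = 0 ∧ B u u' = 0) ∧
      2 * Module.finrank ℂ U + r = 2 * Module.finrank ℂ W

variable {V : Type u} [AddCommGroup V] [Module ℂ V] [FiniteDimensional ℂ V]

lemma key_nondeg (n : ℕ) (ih : IH.{u} n)
    (A B : V →ₗ[ℂ] V →ₗ[ℂ] ℂ) (hA : ∀ x, A x x = 0) (hB : ∀ x, B x x = 0)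
    (r : ℕ) (hr0 : 0 < r) (hrA : formRank A = r)
    (hn : finrank ℂ V ≤ n + 1)
    (hle : ∀ a b : ℂ, formRank (a • A + b • B) ≤ r)
    (hker : LinearMap.ker A = ⊥) :
    ∃ U : Submodule ℂ V,
      (∀ u ∈ U, ∀ u' ∈ U, A u u' = 0 ∧ B u u' = 0) ∧
      2 * finrank ℂ U + r = 2 * finrank ℂ V := by
  classical
  set nV := finrank ℂ V with hnV
  have hrn : r = nV := by
    have := formRank_add_ker A
    rw [hker] at this
    simp only [finrank_bot, add_zero] at this
    omega
  have hnt : Nontrivial V := by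
    apply Module.finrank_pos_iff (R := ℂ) |>.mp
    omega
  -- A is a bijection onto the dual
  have hinj : Function.Injective A := LinearMap.ker_eq_bot.mp hker
  have hsurj : Function.Surjective A := by
    have hd : finrank ℂ V = finrank ℂ (Module.Dual ℂ V) := Subspace.dual_finrank_eq.symm
    exact (LinearMap.injective_iff_surjective_of_finrank_eq_finrank hd).mp hinj
  set e : V ≃ₗ[ℂ] Module.Dual ℂ V := LinearEquiv.ofBijective A ⟨hinj, hsurj⟩ with he
  set P : Module.End ℂ V := e.symm.toLinearMap ∘ₗ B with hP
  obtain ⟨μ, hμ⟩ := Module.End.exists_eigenvalue P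
  obtain ⟨v, hv⟩ := hμ.exists_hasEigenvector
  have hv0 : v ≠ 0 := hv.right
  have hPv : P v = μ • v := hv.apply_eq_smul
  have hBfun : B v = μ • A v := by
    have h1 : e.symm (B v) = μ • v := hPv
    have h2 : B v = e (μ • v) := by
      rw [← h1, LinearEquiv.apply_symm_apply]
    rw [h2, map_smul]
    congr 1
  have hBv : ∀ x : V, B v x = μ * A v x := by
    intro x
    rw [hBfun]; rfl
  have hAv : A v ≠ 0 := fun h => hv0 (hinj (by rw [h, map_zero]))
  -- the hyperplane W
  set W : Submodule ℂ V := LinearMap.ker (A.flip v) with hW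
  have hmemW : ∀ x : V, x ∈ W ↔ A x v = 0 := fun x => Iff.rfl
  have hvW : v ∈ W := by rw [hmemW]; exact hA v
  have hWdim : finrank ℂ W + 1 = nV := by
    have hne : A.flip v ≠ 0 := by
      intro h
      apply hAv
      apply LinearMap.ext
      intro x
      rw [skew hA]
      have := LinearMap.congr_fun h x
      simp only [LinearMap.flip_apply, LinearMap.zero_apply] at this
      rw [this]; simp
    have h1 := LinearMap.finrank_range_add_finrank_ker (A.flip v)
    have h2 : finrank ℂ (LinearMap.range (A.flip v)) = 1 := by
      have hle1 : finrank ℂ (LinearMap.range (A.flip v)) ≤ 1 := by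
        have := Submodule.finrank_le (LinearMap.range (A.flip v))
        simpa [Module.finrank_self] using this
      have hge : finrank ℂ (LinearMap.range (A.flip v)) ≠ 0 := by
        rw [Ne, Submodule.finrank_eq_zero, LinearMap.range_eq_bot]
        exact hne
      omega
    rw [h2] at h1
    rw [hW]
    omega
  -- the line spanned by v
  set K₀ : Submodule ℂ V := Submodule.span ℂ {v} with hK₀
  have hK₀iso : ∀ k ∈ K₀, ∀ k' ∈ K₀, A k k' = 0 := by
    intro k hk k' hk'
    obtain ⟨a, rfl⟩ := Submodule.mem_span_singleton.mp hk
    obtain ⟨a', rfl⟩ := Submodule.mem_span_singleton.mp hk'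
    simp [hA v]
  have hperp : perpF A K₀ = W := by
    ext x
    rw [mem_perpF, hmemW]
    constructor
    · intro h
      exact h v (Submodule.mem_span_singleton_self v)
    · intro h k hk
      obtain ⟨a, rfl⟩ := Submodule.mem_span_singleton.mp hk
      simp [h]
  have hL3 := perp_rank A hA K₀ hK₀iso
  rw [hperp, hrA, hrn] at hL3
  set A₁ := A.compl₁₂ W.subtype W.subtype with hA₁
  have hA₁alt : ∀ x : ↥W, A₁ x x = 0 := fun x => hA x
  have hrankA₁ : formRank A₁ + 2 = nV := by
    have : nV - finrank ℂ W = 1 := by omega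
    rw [this] at hL3
    omega
  -- complement of the line inside W
  set K₀' : Submodule ℂ ↥W := Submodule.comap W.subtype K₀ with hK₀'
  have hK₀W : K₀ ≤ W := by
    rw [hK₀, Submodule.span_le, Set.singleton_subset_iff]
    exact hvW
  obtain ⟨D, hD⟩ := Submodule.exists_isCompl K₀'
  have hK₀'ker : K₀' ≤ LinearMap.ker A₁ := by
    intro k hk
    rw [LinearMap.mem_ker]
    apply LinearMap.ext
    intro y
    obtain ⟨a, ha⟩ := Submodule.mem_span_singleton.mp (Submodule.mem_comap.mp hk)
    have hthis : A₁ k y = A (k : V) (y : V) := rfl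
    have hk2 : (k : V) = a • v := ha.symm
    rw [hthis, hk2, map_smul]
    have : A v (y : V) = 0 := by
      rw [skew hA]
      rw [(hmemW (y : V)).mp y.2]
      simp
    simp [this]
  have hL2 := rank_compl A₁ hA₁alt K₀' D hD hK₀'ker
  set j : ↥D →ₗ[ℂ] V := W.subtype ∘ₗ D.subtype with hj
  have hjinj : Function.Injective j := by
    apply Function.Injective.comp (Submodule.injective_subtype W) (Submodule.injective_subtype D)
  have hcomp : A₁.compl₁₂ D.subtype D.subtype = A.compl₁₂ j j := by
    rw [hA₁, compl₁₂_compl₁₂]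
  have hK₀'dim : finrank ℂ K₀' = 1 := by
    rw [LinearEquiv.finrank_eq (Submodule.comapSubtypeEquivOfLe hK₀W)]
    exact finrank_span_singleton hv0
  have hDdim : finrank ℂ D + 2 = nV := by
    have := Submodule.finrank_add_eq_of_isCompl hD
    omega
  -- apply the induction hypothesis on D
  set AD := A.compl₁₂ j j with hAD
  set BD := B.compl₁₂ j j with hBD
  have hADalt : ∀ x : ↥D, AD x x = 0 := fun x => hA (j x)
  have hBDalt : ∀ x : ↥D, BD x x = 0 := fun x => hB (j x)
  have hADrank : formRank AD = finrank ℂ D := by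
    rw [← hcomp]
    omega
  have hcombo : ∀ a b : ℂ, a • AD + b • BD = (a • A + b • B).compl₁₂ j j := by
    intro a b
    rw [compl₁₂_add, compl₁₂_smul, compl₁₂_smul, hAD, hBD]
  have hle' : ∀ a b : ℂ, formRank (a • AD + b • BD) ≤ finrank ℂ D := by
    intro a b
    exact formRank_le _
  have hex' : ∃ a b : ℂ, formRank (a • AD + b • BD) = finrank ℂ D := by
    refine ⟨1, 0, ?_⟩
    rw [show (1 : ℂ) • AD + (0 : ℂ) • BD = AD by simp]
    exact hADrank
  obtain ⟨U', hU'iso, hU'dim⟩ := ih ↥D (by omega) AD BD hADalt hBDalt (finrank ℂ D) hle' hex'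
  -- assemble U
  set U : Submodule ℂ V := Submodule.map j U' ⊔ K₀ with hU
  have hmapdim : finrank ℂ (Submodule.map j U') = finrank ℂ U' :=
    (LinearEquiv.finrank_eq (Submodule.equivMapOfInjective j hjinj U')).symm
  have hinf : Submodule.map j U' ⊓ K₀ = ⊥ := by
    rw [eq_bot_iff]
    rintro x ⟨hx1, hx2⟩
    obtain ⟨d, hd, rfl⟩ := Submodule.mem_map.mp hx1
    have hdK : D.subtype d ∈ K₀' := Submodule.mem_comap.mpr hx2
    have : D.subtype d ∈ K₀' ⊓ D := ⟨hdK, d.2⟩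
    rw [hD.inf_eq_bot] at this
    rw [Submodule.mem_bot] at this
    have : j d = 0 := by
      rw [hj]
      simp only [LinearMap.coe_comp, Function.comp_apply]
      rw [this]
      simp
    rw [this]
    simp
  have hUdim : finrank ℂ U + 1 = finrank ℂ U' + 2 := by
    have hsum := Submodule.finrank_sup_add_finrank_inf_eq (Submodule.map j U') K₀
    rw [hinf] at hsum
    simp only [finrank_bot, add_zero] at hsum
    rw [hU]
    rw [hsum, hmapdim, hK₀, finrank_span_singleton hv0]
  -- isotropy facts
  have hjW : ∀ d : ↥D, (j d : V) ∈ W := fun d => (D.subtype d).2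
  have hAxv : ∀ x : V, x ∈ W → A x v = 0 := fun x hx => (hmemW x).mp hx
  have hAvx : ∀ x : V, x ∈ W → A v x = 0 := by
    intro x hx
    rw [skew hA, hAxv x hx]; simp
  have hBvx : ∀ x : V, x ∈ W → B v x = 0 := by
    intro x hx
    rw [hBv, hAvx x hx]; simp
  have hBxv : ∀ x : V, x ∈ W → B x v = 0 := by
    intro x hx
    rw [skew hB, hBvx x hx]; simp
  have hUiso : ∀ u ∈ U, ∀ u' ∈ U, A u u' = 0 ∧ B u u' = 0 := by
    intro u hu u' hu'
    rw [hU] at hu hu'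
    obtain ⟨x, hx, y, hy, rfl⟩ := Submodule.mem_sup.mp hu
    obtain ⟨x', hx', y', hy', rfl⟩ := Submodule.mem_sup.mp hu'
    obtain ⟨d, hd, rfl⟩ := Submodule.mem_map.mp hx
    obtain ⟨d', hd', rfl⟩ := Submodule.mem_map.mp hx'
    obtain ⟨a, rfl⟩ := Submodule.mem_span_singleton.mp hy
    obtain ⟨a', rfl⟩ := Submodule.mem_span_singleton.mp hy'
    have hAdd' : A (j d) (j d') = 0 := (hU'iso d hd d' hd').1
    have hBdd' : B (j d) (j d') = 0 := (hU'iso d hd d' hd').2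
    constructor
    · simp only [map_add, map_smul, LinearMap.add_apply, LinearMap.smul_apply, smul_eq_mul]
      rw [hAdd', hAxv _ (hjW d), hAvx _ (hjW d'), hA v]
      ring
    · simp only [map_add, map_smul, LinearMap.add_apply, LinearMap.smul_apply, smul_eq_mul]
      rw [hBdd', hBxv _ (hjW d), hBvx _ (hjW d'), hB v]
      ring
  exact ⟨U, hUiso, by omega⟩

end Key

section KeyDeg
universe u
variable {V : Type u} [AddCommGroup V] [Module ℂ V] [FiniteDimensional ℂ V]

lemma key_deg (n : ℕ) (ih : IH.{u} n)
    (A B : V →ₗ[ℂ] V →ₗ[ℂ] ℂ) (hA : ∀ x, A x x = 0) (hB : ∀ x, B x x = 0)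
    (r : ℕ) (hr0 : 0 < r) (hrA : formRank A = r)
    (hn : finrank ℂ V ≤ n + 1)
    (hle : ∀ a b : ℂ, formRank (a • A + b • B) ≤ r)
    (hker : LinearMap.ker A ≠ ⊥) :
    ∃ U : Submodule ℂ V,
      (∀ u ∈ U, ∀ u' ∈ U, A u u' = 0 ∧ B u u' = 0) ∧
      2 * finrank ℂ U + r = 2 * finrank ℂ V := by
  classical
  set nV := finrank ℂ V with hnV
  set K := LinearMap.ker A with hKdef
  set m := finrank ℂ K with hm
  have hmr : m + r = nV := by
    have h1 := formRank_add_ker A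
    rw [← hKdef] at h1
    omega
  have hm0 : 0 < m := by
    rcases Nat.eq_zero_or_pos m with h | h
    · exact absurd (Submodule.finrank_eq_zero.mp h) hker
    · exact h
  have hAk : ∀ k ∈ K, ∀ x : V, A k x = 0 := by
    intro k hk x
    exact LinearMap.congr_fun (LinearMap.mem_ker.mp hk) x
  have hAk' : ∀ k ∈ K, ∀ x : V, A x k = 0 := by
    intro k hk x
    rw [skew hA, hAk k hk x]; simp
  have hiso : ∀ u ∈ K, ∀ v ∈ K, B u v = 0 := by
    apply ker_isotropic A B hA hB r hrA
    intro l
    have := hle 1 l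
    simpa using this
  set V₁ := perpF B K with hV₁
  have hKV₁ : K ≤ V₁ := fun k hk => by
    rw [hV₁, mem_perpF]
    exact fun k' hk' => hiso k hk k' hk'
  have hsV₁ : finrank ℂ V₁ ≤ nV := Submodule.finrank_le _
  set s := nV - finrank ℂ V₁ with hs
  -- perp agreement for all pencil members with b ≠ 0
  have hperpC : ∀ a b : ℂ, b ≠ 0 → perpF (a • A + b • B) K = V₁ := by
    intro a b hb
    ext x
    rw [mem_perpF, hV₁, mem_perpF]
    have hxk : ∀ k ∈ K, (a • A + b • B) x k = b * B x k := by
      intro k hk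
      simp only [LinearMap.add_apply, LinearMap.smul_apply, smul_eq_mul]
      rw [hAk' k hk x]
      ring
    constructor
    · intro h k hk
      have := h k hk
      rw [hxk k hk] at this
      exact (mul_eq_zero.mp this).resolve_left hb
    · intro h k hk
      rw [hxk k hk, h k hk, mul_zero]
  set K' : Submodule ℂ ↥V₁ := Submodule.comap V₁.subtype K with hK'
  obtain ⟨D, hD⟩ := Submodule.exists_isCompl K'
  set j : ↥D →ₗ[ℂ] V := V₁.subtype ∘ₗ D.subtype with hj
  have hjinj : Function.Injective j := by
    apply Function.Injective.comp (Submodule.injective_subtype V₁) (Submodule.injective_subtype D)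
  have hjV₁ : ∀ d : ↥D, (j d : V) ∈ V₁ := fun d => (D.subtype d).2
  -- the main rank identity for b ≠ 0
  have hmain : ∀ a b : ℂ, b ≠ 0 →
      formRank ((a • A + b • B).compl₁₂ j j) + 2 * s = formRank (a • A + b • B) := by
    intro a b hb
    set C := a • A + b • B with hC
    have hCalt : ∀ x : V, C x x = 0 := by
      intro x
      rw [hC]
      simp [hA x, hB x]
    have hCiso : ∀ k ∈ K, ∀ k' ∈ K, C k k' = 0 := by
      intro k hk k' hk'
      rw [hC]
      simp only [LinearMap.add_apply, LinearMap.smul_apply, smul_eq_mul]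
      rw [hAk k hk k', hiso k hk k' hk']
      ring
    have hL3 := perp_rank C hCalt K hCiso
    rw [hperpC a b hb] at hL3
    set C₁ := C.compl₁₂ V₁.subtype V₁.subtype with hC₁
    have hC₁alt : ∀ x : ↥V₁, C₁ x x = 0 := fun x => hCalt x
    have hK'ker : K' ≤ LinearMap.ker C₁ := by
      intro k hk
      rw [LinearMap.mem_ker]
      apply LinearMap.ext
      intro y
      have h1 : C₁ k y = C (k : V) (y : V) := rfl
      have hkK : (k : V) ∈ K := Submodule.mem_comap.mp hk
      rw [h1, hC]
      simp only [LinearMap.add_apply, LinearMap.smul_apply, smul_eq_mul]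
      rw [hAk _ hkK]
      have hBky : B (k : V) (y : V) = 0 := by
        rw [skew hB]
        rw [y.2 (k : V) hkK]
        simp
      rw [hBky]
      simp
    have hL2 := rank_compl C₁ hC₁alt K' D hD hK'ker
    rw [hC₁, compl₁₂_compl₁₂] at hL2
    rw [← hj] at hL2
    rw [hL2]
    exact hL3
  -- generic attainment of r at nonzero l
  obtain ⟨l, hl0, hlge⟩ := generic_rank A B
  have hlr : formRank ((1 : ℂ) • A + l • B) = r := by
    have h1 := hle 1 l
    have h2 : formRank (A + l • B) = r := by
      have h3 := hle 1 l
      rw [one_smul] at h3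
      have h4 := hlge
      rw [hrA] at h4
      omega
    rw [one_smul]
    exact h2
  set AD := A.compl₁₂ j j with hAD
  set BD := B.compl₁₂ j j with hBD
  have hcombo : ∀ a b : ℂ, a • AD + b • BD = (a • A + b • B).compl₁₂ j j := by
    intro a b
    rw [compl₁₂_add, compl₁₂_smul, compl₁₂_smul]
  set r' := formRank ((1 : ℂ) • AD + l • BD) with hr'
  have hr's : r' + 2 * s = r := by
    rw [hr', hcombo 1 l, hmain 1 l hl0]
    exact hlr
  have hleb : ∀ a b : ℂ, b ≠ 0 → formRank (a • AD + b • BD) ≤ r' := by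
    intro a b hb
    have h1 : formRank (a • AD + b • BD) + 2 * s = formRank (a • A + b • B) := by
      rw [hcombo]
      exact hmain a b hb
    have h2 := hle a b
    omega
  have hle' : ∀ a b : ℂ, formRank (a • AD + b • BD) ≤ r' := by
    intro a b
    rcases eq_or_ne b 0 with rfl | hb
    · rcases eq_or_ne a 0 with rfl | ha
      · rw [show (0 : ℂ) • AD + (0 : ℂ) • BD = 0 by simp]
        rw [formRank_zero]
        exact Nat.zero_le _
      · obtain ⟨l₂, hl₂0, hl₂ge⟩ := generic_rank AD BD
        have h1 : formRank (a • AD + (0 : ℂ) • BD) = formRank AD := by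
          rw [zero_smul, add_zero, formRank_smul ha]
        have h2 : formRank (AD + l₂ • BD) ≤ r' := by
          have h3 := hleb 1 l₂ hl₂0
          rw [one_smul] at h3
          exact h3
        rw [h1]
        exact le_trans hl₂ge h2
    · exact hleb a b hb
  have hex' : ∃ a b : ℂ, formRank (a • AD + b • BD) = r' := ⟨1, l, rfl⟩
  have hK'm : finrank ℂ K' = m :=
    LinearEquiv.finrank_eq (Submodule.comapSubtypeEquivOfLe hKV₁)
  have hDdim := Submodule.finrank_add_eq_of_isCompl hD
  have hDn : finrank ℂ D ≤ n := by omega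
  obtain ⟨U', hU'iso, hU'dim⟩ :=
    ih ↥D hDn AD BD (fun x => hA (j x)) (fun x => hB (j x)) r' hle' hex'
  set U := Submodule.map j U' ⊔ K with hU
  have hmapdim : finrank ℂ (Submodule.map j U') = finrank ℂ U' :=
    (LinearEquiv.finrank_eq (Submodule.equivMapOfInjective j hjinj U')).symm
  have hinf : Submodule.map j U' ⊓ K = ⊥ := by
    rw [eq_bot_iff]
    rintro x ⟨hx1, hx2⟩
    obtain ⟨d, hd, rfl⟩ := Submodule.mem_map.mp hx1
    have hdK : D.subtype d ∈ K' := Submodule.mem_comap.mpr hx2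
    have h0 : D.subtype d ∈ K' ⊓ D := ⟨hdK, d.2⟩
    rw [hD.inf_eq_bot, Submodule.mem_bot] at h0
    have hjd : j d = 0 := by
      rw [hj]
      simp only [LinearMap.coe_comp, Function.comp_apply]
      rw [h0]
      simp
    rw [hjd]
    simp
  have hUdim : finrank ℂ U = finrank ℂ U' + m := by
    have hsum := Submodule.finrank_sup_add_finrank_inf_eq (Submodule.map j U') K
    rw [hinf] at hsum
    simp only [finrank_bot, add_zero] at hsum
    rw [hU, hsum, hmapdim]
  have hUiso : ∀ u ∈ U, ∀ u' ∈ U, A u u' = 0 ∧ B u u' = 0 := by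
    intro u hu u' hu'
    rw [hU] at hu hu'
    obtain ⟨x, hx, y, hy, rfl⟩ := Submodule.mem_sup.mp hu
    obtain ⟨x', hx', y', hy', rfl⟩ := Submodule.mem_sup.mp hu'
    obtain ⟨d, hd, rfl⟩ := Submodule.mem_map.mp hx
    obtain ⟨d', hd', rfl⟩ := Submodule.mem_map.mp hx'
    have hAdd' : A (j d) (j d') = 0 := (hU'iso d hd d' hd').1
    have hBdd' : B (j d) (j d') = 0 := (hU'iso d hd d' hd').2
    have hBdy' : B (j d) y' = 0 := (hjV₁ d) y' hy'
    have hByd' : B y (j d') = 0 := by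
      rw [skew hB]
      rw [(hjV₁ d') y hy]
      simp
    have hByy' : B y y' = 0 := hiso y hy y' hy'
    constructor
    · simp only [map_add, LinearMap.add_apply]
      rw [hAdd', hAk' y' hy' (j d), hAk y hy (j d'), hAk y hy y']
      ring
    · simp only [map_add, LinearMap.add_apply]
      rw [hBdd', hBdy', hByd', hByy']
      ring
  refine ⟨U, hUiso, by omega⟩

end KeyDeg

section Induction
universe u

lemma key : ∀ n : ℕ, IH.{u} n := by
  intro n
  induction n with
  | zero =>
    intro W _ _ _ hW A B hA hB r hle hex
    have hW0 : finrank ℂ W = 0 := Nat.le_zero.mp hW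
    refine ⟨⊤, ?_, ?_⟩
    · intro u hu u' hu'
      have hsub : Subsingleton W := Module.finrank_zero_iff (R := ℂ) |>.mp hW0
      have hu0 : u = 0 := Subsingleton.elim u 0
      rw [hu0]
      simp
    · have hr : r = 0 := by
        obtain ⟨a, b, hab⟩ := hex
        have h1 := formRank_le (a • A + b • B)
        omega
      rw [finrank_top]
      omega
  | succ n ihn =>
    intro W _ _ _ hW A B hA hB r hle hex
    rcases Nat.eq_zero_or_pos r with rfl | hr0
    · -- all forms vanish
      have hzero : ∀ (a b : ℂ), ∀ u u' : W, (a • A + b • B) u u' = 0 := by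
        intro a b u u'
        have h1 := hle a b
        have h2 := formRank_add_ker (a • A + b • B)
        have h3 : finrank ℂ (LinearMap.ker (a • A + b • B)) = finrank ℂ W := by omega
        have h4 : LinearMap.ker (a • A + b • B) = ⊤ := Submodule.eq_top_of_finrank_eq h3
        have h5 : u ∈ LinearMap.ker (a • A + b • B) := h4 ▸ Submodule.mem_top
        exact LinearMap.congr_fun (LinearMap.mem_ker.mp h5) u'
      refine ⟨⊤, ?_, ?_⟩
      · intro u hu u' hu'
        constructor
        · have := hzero 1 0 u u'
          simpa using this
        · have := hzero 0 1 u u'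
          simpa using this
      · rw [finrank_top]
        omega
    · obtain ⟨a₀, b₀, hab⟩ := hex
      have hab0 : ¬(a₀ = 0 ∧ b₀ = 0) := by
        rintro ⟨rfl, rfl⟩
        rw [show (0 : ℂ) • A + (0 : ℂ) • B = 0 by simp, formRank_zero] at hab
        omega
      obtain ⟨c, d, hcd⟩ : ∃ c d : ℂ, a₀ * d - b₀ * c = 1 := by
        rcases eq_or_ne a₀ 0 with rfl | ha
        · have hb : b₀ ≠ 0 := by tauto
          exact ⟨-b₀⁻¹, 0, by field_simp; norm_num⟩
        · exact ⟨0, a₀⁻¹, by field_simp; norm_num⟩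
      set A' := a₀ • A + b₀ • B with hA'
      set B' := c • A + d • B with hB'
      have hA'alt : ∀ x, A' x x = 0 := fun x => by rw [hA']; simp [hA x, hB x]
      have hB'alt : ∀ x, B' x x = 0 := fun x => by rw [hB']; simp [hA x, hB x]
      have hAexp : ∀ u u' : W, A u u' = d * A' u u' + (-b₀) * B' u u' := by
        intro u u'
        rw [hA', hB']
        simp only [LinearMap.add_apply, LinearMap.smul_apply, smul_eq_mul]
        linear_combination (-((A u) u')) * hcd
      have hBexp : ∀ u u' : W, B u u' = (-c) * A' u u' + a₀ * B' u u' := by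
        intro u u'
        rw [hA', hB']
        simp only [LinearMap.add_apply, LinearMap.smul_apply, smul_eq_mul]
        linear_combination (-((B u) u')) * hcd
      have hcombo : ∀ a b : ℂ, a • A' + b • B' = (a * a₀ + b * c) • A + (a * b₀ + b * d) • B := by
        intro a b
        rw [hA', hB']
        apply LinearMap.ext; intro x; apply LinearMap.ext; intro y
        simp only [LinearMap.add_apply, LinearMap.smul_apply, smul_eq_mul]
        ring
      have hle2 : ∀ a b : ℂ, formRank (a • A' + b • B') ≤ r := by
        intro a b
        rw [hcombo]
        exact hle _ _
      have hrA' : formRank A' = r := hab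
      have hfin : ∃ U : Submodule ℂ W,
          (∀ u ∈ U, ∀ u' ∈ U, A' u u' = 0 ∧ B' u u' = 0) ∧
          2 * finrank ℂ U + r = 2 * finrank ℂ W := by
        by_cases hk : LinearMap.ker A' = ⊥
        · exact key_nondeg n ihn A' B' hA'alt hB'alt r hr0 hrA' hW hle2 hk
        · exact key_deg n ihn A' B' hA'alt hB'alt r hr0 hrA' hW hle2 hk
      obtain ⟨U, hUiso, hUdim⟩ := hfin
      refine ⟨U, ?_, hUdim⟩
      intro u hu u' hu'
      obtain ⟨h1, h2⟩ := hUiso u hu u' hu'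
      constructor
      · rw [hAexp u u', h1, h2]
        ring
      · rw [hBexp u u', h1, h2]
        ring

end Induction

/-- For every pencil of alternating bilinear forms on a finite-dimensional complex vector
space, the rank `r` of the pencil (the maximum over `λ ∈ ℂ` of `rank (A + λB)`) is even,
and there exists a bi-Lagrangian subspace: a subspace `U` isotropic for both `A` and `B`
with `2 · dim U = 2 · dim V − r`. -/
theorem exists_biLagrangian
    (V : Type*) [AddCommGroup V] [Module ℂ V] [FiniteDimensional ℂ V]
    (A B : V →ₗ[ℂ] V →ₗ[ℂ] ℂ)
    (hA : ∀ v : V, A v v = 0) (hB : ∀ v : V, B v v = 0)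
    (r : ℕ)
    (hr_le : ∀ l : ℂ, formRank (A + l • B) ≤ r)
    (hr_ex : ∃ l : ℂ, formRank (A + l • B) = r) :
    Even r ∧
      ∃ U : Submodule ℂ V,
        (∀ u ∈ U, ∀ u' ∈ U, A u u' = 0 ∧ B u u' = 0) ∧
        2 * Module.finrank ℂ U = 2 * Module.finrank ℂ V - r := by
  have hsym_le : ∀ a b : ℂ, formRank (a • A + b • B) ≤ r := by
    intro a b
    rcases eq_or_ne a 0 with rfl | ha
    · rcases eq_or_ne b 0 with rfl | hb
      · rw [show (0 : ℂ) • A + (0 : ℂ) • B = 0 by simp, formRank_zero]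
        exact Nat.zero_le _
      · rw [zero_smul, zero_add, formRank_smul hb]
        obtain ⟨mu, hmu0, hmuge⟩ := generic_rank B A
        have h2 : B + mu • A = mu • (A + mu⁻¹ • B) := by
          rw [smul_add, smul_smul, mul_inv_cancel₀ hmu0, one_smul, add_comm]
        have h1 : formRank (B + mu • A) = formRank (A + mu⁻¹ • B) := by
          rw [h2, formRank_smul hmu0]
        calc formRank B ≤ formRank (B + mu • A) := hmuge
          _ = formRank (A + mu⁻¹ • B) := h1
          _ ≤ r := hr_le mu⁻¹
    · have hba : a * (b / a) = b := by field_simp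
      have h1 : a • A + b • B = a • (A + (b / a) • B) := by
        rw [smul_add, smul_smul, hba]
      rw [h1, formRank_smul ha]
      exact hr_le _
  obtain ⟨l₀, hl₀⟩ := hr_ex
  have hsym_ex : ∃ a b : ℂ, formRank (a • A + b • B) = r := by
    refine ⟨1, l₀, ?_⟩
    rw [one_smul]
    exact hl₀
  obtain ⟨U, hUiso, hUdim⟩ := key (finrank ℂ V) V le_rfl A B hA hB r hsym_le hsym_ex
  have hrle2 : r ≤ 2 * finrank ℂ V := by omega
  refine ⟨⟨finrank ℂ V - finrank ℂ U, by omega⟩, U, hUiso, by omega⟩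
end

section
/- The subspace L spanned by the kernels of the regular forms of the pencil is bi-isotropic: for all u, v ∈ L one has A(u,v) = 0 and B(u,v) = 0, and consequently (A + λB)(u,v) = 0 for every λ ∈ ℂ. -/
open Module LinearMap Polynomial Matrix

private lemma skew_of_alt {V : Type*} [AddCommGroup V] [Module ℂ V]
    (C : V →ₗ[ℂ] V →ₗ[ℂ] ℂ) (hC : ∀ v, C v v = 0) (x y : V) : C x y = - C y x := by
  have h := hC (x + y)
  simp only [map_add, LinearMap.add_apply, hC] at h
  linear_combination h

private lemma key_same {V : Type*} [AddCommGroup V] [Module ℂ V] [FiniteDimensional ℂ V]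
    (A B : V →ₗ[ℂ] V →ₗ[ℂ] ℂ) (hA : ∀ v, A v v = 0) (hB : ∀ v, B v v = 0)
    (r : ℕ) (hr_le : ∀ l : ℂ, formRank (A + l • B) ≤ r)
    (lam : ℂ) (hlam : formRank (A + lam • B) = r)
    (u v : V) (hu : u ∈ LinearMap.ker (A + lam • B)) (hv : v ∈ LinearMap.ker (A + lam • B)) :
    B u v = 0 := by
  classical
  by_contra hc
  set n := Module.finrank ℂ V with hn
  set Cl : V →ₗ[ℂ] V →ₗ[ℂ] ℂ := A + lam • B with hCl
  have hClalt : ∀ x, Cl x x = 0 := by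
    intro x; simp [hCl, hA, hB]
  have hCu : ∀ y, Cl u y = 0 := fun y => congrFun (congrArg _ (LinearMap.mem_ker.1 hu)) y
  have hCv : ∀ y, Cl v y = 0 := fun y => congrFun (congrArg _ (LinearMap.mem_ker.1 hv)) y
  set K := LinearMap.ker Cl with hK
  obtain ⟨W, hW⟩ := Submodule.exists_isCompl K
  have hKn : finrank ℂ K ≤ n := Submodule.finrank_le K
  have hlam' : n - finrank ℂ K = r := hlam
  have hKW : finrank ℂ K + finrank ℂ W = n := Submodule.finrank_add_eq_of_isCompl hW
  have hWr : finrank ℂ W = r := by omega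
  set m := finrank ℂ W with hm
  let bW : Basis (Fin m) ℂ W := Module.finBasis ℂ W
  -- the index type and vectors
  let e : Fin 2 ⊕ Fin m → V := Sum.elim ![u, v] fun b => (bW b : V)
  have heK : ∀ a : Fin 2, Cl (e (Sum.inl a)) = 0 := by
    intro a
    fin_cases a
    · exact LinearMap.mem_ker.1 hu
    · exact LinearMap.mem_ker.1 hv
  -- the Gram matrix of Cl on W is nondegenerate
  set S : Matrix (Fin m) (Fin m) ℂ := Matrix.of fun a b => Cl (bW a) (bW b) with hS
  have hSdet : S.det ≠ 0 := by
    intro hdet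
    obtain ⟨c, hc0, hcS⟩ := Matrix.exists_vecMul_eq_zero_iff.2 hdet
    set x : W := ∑ a, c a • bW a with hx
    have hxW : ∀ b : Fin m, Cl (x : V) (bW b) = 0 := by
      intro b
      have : Cl (x : V) (bW b) = ∑ a, c a * Cl (bW a) (bW b) := by
        simp [hx, map_sum]
      rw [this]
      have := congrFun hcS b
      simpa [Matrix.vecMul, dotProduct, hS] using this
    have hxW' : ∀ y ∈ W, Cl (x : V) y = 0 := by
      intro y hy
      have hfun : ((Cl (x : V)).comp W.subtype) = 0 := by
        apply bW.ext
        intro b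
        simpa using hxW b
      simpa using congrFun (congrArg DFunLike.coe hfun) ⟨y, hy⟩
    have hxK : ∀ y ∈ K, Cl (x : V) y = 0 := by
      intro y hy
      rw [skew_of_alt Cl hClalt]
      have : Cl y = 0 := LinearMap.mem_ker.1 hy
      simp [this]
    have hxall : ∀ y : V, Cl (x : V) y = 0 := by
      intro y
      have hy : y ∈ K ⊔ W := by rw [hW.sup_eq_top]; trivial
      obtain ⟨k, hk, w, hw, rfl⟩ := Submodule.mem_sup.1 hy
      rw [map_add, hxK k hk, hxW' w hw, add_zero]
    have hxmem : (x : V) ∈ K ⊓ W := by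
      refine ⟨LinearMap.mem_ker.2 (LinearMap.ext hxall), x.2⟩
    rw [hW.inf_eq_bot] at hxmem
    have hx0 : x = 0 := by
      ext
      simpa using hxmem
    have := bW.linearIndependent
    rw [Fintype.linearIndependent_iff] at this
    exact hc0 (funext (this c (by rw [← hx, hx0])))
  -- polynomial matrix
  set w : Fin 2 ⊕ Fin m → Polynomial ℂ := Sum.elim (fun _ => 1) (fun _ => Polynomial.X) with hw
  set Hp : Matrix (Fin 2 ⊕ Fin m) (Fin 2 ⊕ Fin m) (Polynomial ℂ) :=
    Matrix.of fun i j => Polynomial.C (Cl (e i) (e j)) + w i * Polynomial.C (B (e i) (e j))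
    with hHp
  set P : Polynomial ℂ := Hp.det with hP
  -- value at 0
  have hdeteval : ∀ (sc : ℂ), (Hp.map (Polynomial.evalRingHom sc)).det = P.eval sc := by
    intro sc
    rw [hP, ← RingHom.mapMatrix_apply, ← RingHom.map_det]
    simp
  have hmap0 : Hp.map (Polynomial.evalRingHom (0 : ℂ)) =
      Matrix.fromBlocks
        (Matrix.of fun a a' : Fin 2 => B (e (Sum.inl a)) (e (Sum.inl a')))
        (Matrix.of fun (a : Fin 2) (b : Fin m) => B (e (Sum.inl a)) (e (Sum.inr b)))
        0 S := by
    ext i j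
    rcases i with a | b <;> rcases j with a' | b'
    · simp [hHp, hw, Matrix.fromBlocks, heK]
    · simp [hHp, hw, Matrix.fromBlocks, heK]
    · -- bottom-left : Cl (w b) (u or v) = 0
      have hsk : Cl (e (Sum.inr b)) (e (Sum.inl a')) = - Cl (e (Sum.inl a')) (e (Sum.inr b)) :=
        skew_of_alt Cl hClalt _ _
      simp [hHp, hw, Matrix.fromBlocks, hsk, heK]
    · simp [hHp, hw, Matrix.fromBlocks, hS]
      rfl
  have hdetb : (Matrix.of fun a a' : Fin 2 => B (e (Sum.inl a)) (e (Sum.inl a'))).det =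
      B u v * B u v := by
    rw [Matrix.det_fin_two]
    have h01 : e (Sum.inl 0) = u := rfl
    have h11 : e (Sum.inl 1) = v := rfl
    simp only [Matrix.of_apply, h01, h11]
    rw [skew_of_alt B hB v u]
    simp [hB]
  have hP0 : P.eval 0 ≠ 0 := by
    rw [← hdeteval 0, hmap0, Matrix.det_fromBlocks_zero₂₁, hdetb]
    exact mul_ne_zero (mul_ne_zero hc hc) hSdet
  have hPne : P ≠ 0 := fun h => hP0 (by simp [h])
  -- choose t ≠ 0 with P.eval t ≠ 0
  obtain ⟨t, ht⟩ : ∃ t : ℂ, t ∉ ({x | P.IsRoot x} ∪ {0} : Set ℂ) := by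
    have hfin : ({x | P.IsRoot x} ∪ {0} : Set ℂ).Finite :=
      (Polynomial.finite_setOf_isRoot hPne).union (Set.finite_singleton 0)
    exact hfin.infinite_compl.nonempty
  have ht0 : t ≠ 0 := fun h => ht (Or.inr (by simp [h]))
  have htP : P.eval t ≠ 0 := fun h => ht (Or.inl h)
  -- the perturbed form
  set C' : V →ₗ[ℂ] V →ₗ[ℂ] ℂ := A + (lam + t) • B with hC'
  have hC'xy : ∀ x y : V, C' x y = Cl x y + t * B x y := by
    intro x y
    simp [hC', hCl, add_smul]
    ring
  set Ht : Matrix (Fin 2 ⊕ Fin m) (Fin 2 ⊕ Fin m) ℂ := Hp.map (Polynomial.evalRingHom t)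
    with hHt
  have hHtdet : Ht.det ≠ 0 := by
    rw [hHt, hdeteval t]
    exact htP
  set G : Matrix (Fin 2 ⊕ Fin m) (Fin 2 ⊕ Fin m) ℂ := Matrix.of fun i j => C' (e i) (e j)
    with hG
  have hGscale : G = Matrix.of fun i j =>
      (Sum.elim (fun _ : Fin 2 => t) (fun _ : Fin m => (1 : ℂ)) i) * Ht i j := by
    ext i j
    rcases i with a | b
    · simp [hG, hHt, hHp, hw, hC'xy, heK]
    · simp [hG, hHt, hHp, hw, hC'xy]
  have hGdet : G.det ≠ 0 := by
    rw [hGscale, Matrix.det_mul_column]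
    have : (∏ i : Fin 2 ⊕ Fin m,
        Sum.elim (fun _ : Fin 2 => t) (fun _ : Fin m => (1 : ℂ)) i) = t * t := by
      rw [Fintype.prod_sumElim]
      simp [Fin.prod_univ_two]
      ring
    rw [this]
    exact mul_ne_zero (mul_ne_zero ht0 ht0) hHtdet
  -- rank bound
  let h : ((Fin 2 ⊕ Fin m) → ℂ) →ₗ[ℂ] V := Fintype.linearCombination ℂ e
  let pi : (V →ₗ[ℂ] ℂ) →ₗ[ℂ] ((Fin 2 ⊕ Fin m) → ℂ) :=
    LinearMap.pi fun j => LinearMap.applyₗ (e j)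
  let Phi : ((Fin 2 ⊕ Fin m) → ℂ) →ₗ[ℂ] ((Fin 2 ⊕ Fin m) → ℂ) := (pi.comp C').comp h
  have hPhi : ∀ c j, Phi c j = ∑ i, c i * G i j := by
    intro c j
    simp [Phi, pi, h, Fintype.linearCombination_apply, map_sum, hG,
      LinearMap.sum_apply, LinearMap.applyₗ]
    rfl
  have hPhiInj : Function.Injective Phi := by
    rw [← LinearMap.ker_eq_bot]
    rw [LinearMap.ker_eq_bot']
    intro c hc0
    by_contra hcne
    apply hGdet
    rw [← Matrix.exists_vecMul_eq_zero_iff]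
    refine ⟨c, hcne, ?_⟩
    funext j
    have : Phi c j = 0 := by rw [hc0]; rfl
    rw [hPhi] at this
    simpa [Matrix.vecMul, dotProduct] using this
  have hrankPhi : finrank ℂ (LinearMap.range Phi) = 2 + m := by
    rw [LinearMap.finrank_range_of_inj hPhiInj]
    simp [Module.finrank_fintype_fun_eq_card]
  have hle1 : finrank ℂ (LinearMap.range Phi) ≤ finrank ℂ (LinearMap.range C') := by
    have h1 : LinearMap.range Phi ≤ Submodule.map pi (LinearMap.range C') := by
      rw [show Phi = pi.comp (C'.comp h) from rfl, LinearMap.range_comp]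
      exact Submodule.map_mono (LinearMap.range_comp_le_range _ _)
    calc finrank ℂ (LinearMap.range Phi) ≤ finrank ℂ (Submodule.map pi (LinearMap.range C')) :=
          Submodule.finrank_mono h1
      _ ≤ finrank ℂ (LinearMap.range C') := Submodule.finrank_map_le _ _
  have hrn : finrank ℂ (LinearMap.range C') + finrank ℂ (LinearMap.ker C') = n :=
    LinearMap.finrank_range_add_finrank_ker C'
  have hfr : formRank (A + (lam + t) • B) ≤ r := hr_le (lam + t)
  have hfr' : n - finrank ℂ (LinearMap.ker C') ≤ r := hfr
  omega

private lemma key_pair {V : Type*} [AddCommGroup V] [Module ℂ V] [FiniteDimensional ℂ V]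
    (A B : V →ₗ[ℂ] V →ₗ[ℂ] ℂ) (hA : ∀ v, A v v = 0) (hB : ∀ v, B v v = 0)
    (r : ℕ) (hr_le : ∀ l : ℂ, formRank (A + l • B) ≤ r)
    (lam mu : ℂ) (hlam : formRank (A + lam • B) = r) (hmu : formRank (A + mu • B) = r)
    (u v : V) (hu : u ∈ LinearMap.ker (A + lam • B)) (hv : v ∈ LinearMap.ker (A + mu • B)) :
    A u v = 0 ∧ B u v = 0 := by
  have hlu : A u v + lam * B u v = 0 := by
    have := congrFun (congrArg DFunLike.coe (LinearMap.mem_ker.1 hu)) v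
    simpa using this
  by_cases hlm : lam = mu
  · subst hlm
    have hBuv : B u v = 0 := key_same A B hA hB r hr_le lam hlam u v hu hv
    constructor
    · linear_combination hlu - lam * hBuv
    · exact hBuv
  · have hmv : A u v + mu * B u v = 0 := by
      have h1 : A v u + mu * B v u = 0 := by
        have := congrFun (congrArg DFunLike.coe (LinearMap.mem_ker.1 hv)) u
        simpa using this
      have h2 := skew_of_alt A hA u v
      have h3 := skew_of_alt B hB u v
      rw [h2, h3]
      linear_combination -h1
    have hB0 : B u v = 0 := by
      have hsub : (lam - mu) * B u v = 0 := by linear_combination hlu - hmv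
      exact (mul_eq_zero.1 hsub).resolve_left (sub_ne_zero.2 hlm)
    constructor
    · linear_combination hlu - lam * hB0
    · exact hB0

/-- The subspace `L` spanned by the kernels of the regular forms of the pencil
(`λ` is regular when `rank (A + λB) = r`, the rank of the pencil) is bi-isotropic:
`A` and `B` (and hence every form `A + λB` of the pencil) vanish on pairs of
vectors from `L`. -/
theorem L_bi_isotropic
    (V : Type*) [AddCommGroup V] [Module ℂ V] [FiniteDimensional ℂ V]
    (A B : V →ₗ[ℂ] V →ₗ[ℂ] ℂ)
    (hA : ∀ v : V, A v v = 0) (hB : ∀ v : V, B v v = 0)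
    (r : ℕ)
    (hr_le : ∀ l : ℂ, formRank (A + l • B) ≤ r)
    (hr_ex : ∃ l : ℂ, formRank (A + l • B) = r)
    (L : Submodule ℂ V)
    (hL : L = Submodule.span ℂ
      (⋃ l ∈ {l : ℂ | formRank (A + l • B) = r}, (LinearMap.ker (A + l • B) : Set V))) :
    ∀ u ∈ L, ∀ v ∈ L, A u v = 0 ∧ B u v = 0 ∧ ∀ l : ℂ, (A + l • B) u v = 0 := by
  set s : Set V := ⋃ l ∈ {l : ℂ | formRank (A + l • B) = r}, (LinearMap.ker (A + l • B) : Set V)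
    with hs
  have main : ∀ u ∈ L, ∀ v ∈ L, A u v = 0 ∧ B u v = 0 := by
    intro u hu v hv
    rw [hL] at hu hv
    induction hu using Submodule.span_induction with
    | mem x hx =>
      induction hv using Submodule.span_induction with
      | mem y hy =>
        simp only [hs, Set.mem_iUnion, Set.mem_setOf_eq, SetLike.mem_coe] at hx hy
        obtain ⟨lam, hlam, hxk⟩ := hx
        obtain ⟨mu, hmu, hyk⟩ := hy
        exact key_pair A B hA hB r hr_le lam mu hlam hmu x y hxk hyk
      | zero => simp
      | add y z _ _ hy hz =>
        obtain ⟨h1, h2⟩ := hy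
        obtain ⟨h3, h4⟩ := hz
        constructor <;> simp [map_add, h1, h2, h3, h4]
      | smul a y _ hy =>
        obtain ⟨h1, h2⟩ := hy
        constructor <;> simp [_root_.map_smul, h1, h2]
    | zero => simp
    | add x z _ _ hx hz =>
      obtain ⟨h1, h2⟩ := hx
      obtain ⟨h3, h4⟩ := hz
      constructor <;> simp [map_add, LinearMap.add_apply, h1, h2, h3, h4]
    | smul a x _ hx =>
      obtain ⟨h1, h2⟩ := hx
      constructor <;> simp [_root_.map_smul, LinearMap.smul_apply, h1, h2]
  intro u hu v hv
  obtain ⟨h1, h2⟩ := main u hu v hv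
  refine ⟨h1, h2, fun l => ?_⟩
  simp [h1, h2]
end

section
/- Let μ ∈ ℂ with μ ≠ 0, set K = ker(A + μB), c = dim V − r, and let ker(A|_K) = {v ∈ K : A(v,w) = 0 for all w ∈ K}. Then dim K ≥ c, dim ker(A|_K) ≥ c, and both differences dim K − c and dim ker(A|_K) − c are even (twice the number of Jordan μ-blocks, respectively twice the number of non-trivial Jordan μ-blocks, of the pencil). -/
open LinearMap Module Polynomial Matrix

section Aux

variable {V : Type*} [AddCommGroup V] [Module ℂ V] [FiniteDimensional ℂ V]

lemma formRank_eq_finrank_range (D : V →ₗ[ℂ] V →ₗ[ℂ] ℂ) :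
    formRank D = Module.finrank ℂ (LinearMap.range D) := by
  have h := LinearMap.finrank_range_add_finrank_ker D
  have h2 : Module.finrank ℂ (LinearMap.ker D) ≤ Module.finrank ℂ V :=
    Submodule.finrank_le _
  unfold formRank; omega

lemma gram_le_formRank {ι : Type*} [Fintype ι] [DecidableEq ι]
    (D : V →ₗ[ℂ] V →ₗ[ℂ] ℂ) (x y : ι → V)
    (h : (Matrix.of fun i j => D (x i) (y j)).det ≠ 0) :
    Fintype.card ι ≤ formRank D := by
  classical
  set M : Matrix ι ι ℂ := Matrix.of fun i j => D (x i) (y j) with hM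
  set π : (V →ₗ[ℂ] ℂ) →ₗ[ℂ] (ι → ℂ) := LinearMap.pi (fun j => LinearMap.applyₗ (y j)) with hπ
  set Φ : V →ₗ[ℂ] (ι → ℂ) := π ∘ₗ D with hΦ
  have hu : IsUnit M.det := isUnit_iff_ne_zero.mpr h
  have hΦ_surj : Function.Surjective Φ := by
    intro cvec
    refine ⟨∑ i, (cvec ᵥ* M⁻¹) i • x i, ?_⟩
    funext j
    have h1 : Φ (∑ i, (cvec ᵥ* M⁻¹) i • x i) j = ((cvec ᵥ* M⁻¹) ᵥ* M) j := by
      simp [hΦ, hπ, Matrix.vecMul, dotProduct, hM, map_sum, smul_eq_mul]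
    rw [h1, Matrix.vecMul_vecMul, Matrix.nonsing_inv_mul M hu, Matrix.vecMul_one]
  have h2 : LinearMap.range Φ = ⊤ := LinearMap.range_eq_top.mpr hΦ_surj
  have h3 : Fintype.card ι = Module.finrank ℂ (LinearMap.range Φ) := by
    rw [h2]
    simp [finrank_top]
  have h4 : LinearMap.range Φ = Submodule.map π (LinearMap.range D) := by
    rw [hΦ, LinearMap.range_comp]
  have h5 : Module.finrank ℂ (LinearMap.range Φ) ≤ Module.finrank ℂ (LinearMap.range D) := by
    rw [h4]; exact Submodule.finrank_map_le _ _
  rw [formRank_eq_finrank_range]; omega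

lemma exists_gram (D : V →ₗ[ℂ] V →ₗ[ℂ] ℂ) (hD : ∀ v, D v v = 0) :
    Even (formRank D) ∧ ∃ v : Fin (formRank D) → V,
      (Matrix.of fun i j => D (v i) (v j)).det ≠ 0 := by
  classical
  have hskew : ∀ v w : V, D w v = -D v w := by
    intro v w
    have h := hD (v + w)
    simp only [map_add, LinearMap.add_apply, hD v, hD w, zero_add, add_zero] at h
    exact eq_neg_of_add_eq_zero_left h
  obtain ⟨U, hU⟩ := Submodule.exists_isCompl (LinearMap.ker D)
  have hdim : Module.finrank ℂ U = formRank D := by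
    have h := Submodule.finrank_add_eq_of_isCompl hU
    have h2 : Module.finrank ℂ (LinearMap.ker D) ≤ Module.finrank ℂ V :=
      Submodule.finrank_le _
    unfold formRank; omega
  set F : U →ₗ[ℂ] U →ₗ[ℂ] ℂ := D.compl₁₂ U.subtype U.subtype with hF
  have hFnd : LinearMap.BilinForm.Nondegenerate F := by
    refine LinearMap.BilinForm.Nondegenerate.ofSeparatingLeft ?_
    intro u hu
    have hmem : (u : V) ∈ LinearMap.ker D := by
      rw [LinearMap.mem_ker]
      ext v
      have hv : v ∈ LinearMap.ker D ⊔ U := by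
        rw [hU.sup_eq_top]; trivial
      obtain ⟨k, hk, u', hu', rfl⟩ := Submodule.mem_sup.mp hv
      have hk0 : D k = 0 := hk
      have e1 : D (u : V) k = 0 := by
        rw [hskew k (u : V)]
        simp [hk0]
      have e2 : D (u : V) u' = 0 := hu ⟨u', hu'⟩
      simp [map_add, e1, e2]
    have h0 : (u : V) = 0 :=
      (Submodule.disjoint_def.mp hU.disjoint) _ hmem u.2
    exact Subtype.ext h0
  set b : Basis (Fin (formRank D)) ℂ U := (Module.finBasis ℂ U).reindex (finCongr hdim) with hb
  have hdet : (_root_.BilinForm.toMatrix b F).det ≠ 0 :=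
    (LinearMap.BilinForm.nondegenerate_iff_det_ne_zero b).mp hFnd
  set G := _root_.BilinForm.toMatrix b F with hG
  have hGentry : ∀ i j, G i j = D ((b i : V)) ((b j : V)) := by
    intro i j
    rw [hG]; exact LinearMap.BilinForm.toMatrix_apply b F i j
  have heven : Even (formRank D) := by
    by_contra hodd
    rw [Nat.not_even_iff_odd] at hodd
    have hGskew : Gᵀ = -G := by
      ext i j
      simp only [Matrix.transpose_apply, Matrix.neg_apply, hGentry]
      exact hskew _ _
    have h1 : G.det = (-1 : ℂ) ^ (formRank D) * G.det := by
      conv_lhs => rw [← Matrix.det_transpose, hGskew]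
      rw [Matrix.det_neg]
      simp
    rw [hodd.neg_one_pow] at h1
    have h2 : (2 : ℂ) * G.det = 0 := by linear_combination h1
    exact hdet ((mul_eq_zero.mp h2).resolve_left two_ne_zero)
  refine ⟨heven, fun i => (b i : V), ?_⟩
  have hEq : (Matrix.of fun i j => D ((b i : V)) ((b j : V))) = G := by
    ext i j
    rw [Matrix.of_apply, hGentry]
  rw [hEq]
  exact hdet

end Aux

/-- Counting Jordan `μ`-blocks: for a characteristic value `μ ≠ 0` let
`K = ker (A + μB)`, let `c = dim V − r` be the corank of the pencil, and let
`ker (A|_K)` be the kernel of the restriction of `A` to `K`. Then `dim K ≥ c`,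
`dim ker (A|_K) ≥ c`, and both differences `dim K − c` and `dim ker (A|_K) − c`
are even (twice the number of Jordan `μ`-blocks, respectively twice the number of
non-trivial Jordan `μ`-blocks, of the pencil). -/
theorem jordan_block_counts
    (V : Type*) [AddCommGroup V] [Module ℂ V] [FiniteDimensional ℂ V]
    (A B : V →ₗ[ℂ] V →ₗ[ℂ] ℂ)
    (hA : ∀ v : V, A v v = 0) (hB : ∀ v : V, B v v = 0)
    (r : ℕ)
    (hr_le : ∀ l : ℂ, formRank (A + l • B) ≤ r)
    (hr_ex : ∃ l : ℂ, formRank (A + l • B) = r)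
    (mu : ℂ) (hmu : mu ≠ 0)
    (c : ℕ) (hc : c = Module.finrank ℂ V - r)
    (K : Submodule ℂ V) (hK : K = LinearMap.ker (A + mu • B))
    (kerAK : ℕ)
    (hkerAK : kerAK = Module.finrank ℂ
      (LinearMap.ker (A.compl₁₂ K.subtype K.subtype))) :
    c ≤ Module.finrank ℂ K ∧ c ≤ kerAK ∧
      Even (Module.finrank ℂ K - c) ∧ Even (kerAK - c) := by
  classical
  subst hc hK hkerAK
  set n := Module.finrank ℂ V with hn
  set Cb : V →ₗ[ℂ] V →ₗ[ℂ] ℂ := A + mu • B with hCb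
  set K : Submodule ℂ V := LinearMap.ker Cb with hK
  have hCb_apply : ∀ v y : V, Cb v y = A v y + mu * B v y := by
    intro v y; simp [hCb]
  have hCb_alt : ∀ v, Cb v v = 0 := by
    intro v; rw [hCb_apply, hA, hB]; ring
  set AK : K →ₗ[ℂ] K →ₗ[ℂ] ℂ := A.compl₁₂ K.subtype K.subtype with hAKdef
  have hAK_apply : ∀ v w : K, AK v w = A (v : V) (w : V) := by
    intro v w; simp [hAKdef]
  have hAK_alt : ∀ v : K, AK v v = 0 := by
    intro v; rw [hAK_apply]; exact hA _
  -- skewness of Cb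
  have hCb_skew : ∀ v w : V, Cb w v = -Cb v w := by
    intro v w
    have h := hCb_alt (v + w)
    simp only [map_add, LinearMap.add_apply, hCb_alt v, hCb_alt w, zero_add, add_zero] at h
    exact eq_neg_of_add_eq_zero_left h
  -- evenness facts
  obtain ⟨l, hl⟩ := hr_ex
  have hl_alt : ∀ v, (A + l • B) v v = 0 := by
    intro v; simp [hA v, hB v]
  have hr_even : Even r := hl ▸ (exists_gram (A + l • B) hl_alt).1
  have hr_le_n : r ≤ n := by
    rw [← hl]; unfold formRank; omega
  have hw_even : Even (formRank Cb) := (exists_gram Cb hCb_alt).1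
  have hρ_even : Even (formRank AK) := (exists_gram AK hAK_alt).1
  set ρ := formRank AK with hρ
  set wd := formRank Cb with hwd
  -- Gram vectors
  obtain ⟨-, wv, hwv⟩ := exists_gram Cb hCb_alt
  obtain ⟨-, uv, huv⟩ := exists_gram AK hAK_alt
  set u : Fin ρ → V := fun i => (uv i : V) with hu
  have hu_ker : ∀ a, Cb (u a) = 0 := fun a => (uv a).2
  have hu_rel : ∀ a y, A (u a) y + mu * B (u a) y = 0 := by
    intro a y
    have h := LinearMap.ext_iff.mp (hu_ker a) y
    rw [← hCb_apply]
    simpa using h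
  -- the combined family
  set x : Fin ρ ⊕ Fin wd → V := Sum.elim u wv with hx
  -- matrices
  set BB : Matrix (Fin ρ ⊕ Fin wd) (Fin ρ ⊕ Fin wd) ℂ :=
    Matrix.of fun i j => Sum.elim (fun _ => (0 : ℂ)) (fun a => B (wv a) (x j)) i with hBB
  set CC : Matrix (Fin ρ ⊕ Fin wd) (Fin ρ ⊕ Fin wd) ℂ :=
    Matrix.of fun i j => Sum.elim (fun a => B (u a) (x j)) (fun a => Cb (wv a) (x j)) i with hCC
  set Nt : ℂ → Matrix (Fin ρ ⊕ Fin wd) (Fin ρ ⊕ Fin wd) ℂ :=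
    fun t => Matrix.of fun i j => CC i j + t * BB i j with hNt
  -- determinant at 0 is nonzero
  have h0 : (Nt 0).det ≠ 0 := by
    have hform : Nt 0 = Matrix.fromBlocks
        (Matrix.of fun a b => B (u a) (u b))
        (Matrix.of fun a b => B (u a) (wv b))
        0
        (Matrix.of fun a b => Cb (wv a) (wv b)) := by
      ext i j
      rcases i with a | a <;> rcases j with b | b <;>
        simp [hNt, hCC, hBB, hx, Matrix.fromBlocks]
      · -- Cb (wv a) (u b) = 0
        rw [hCb_skew (u b) (wv a)]
        simp [hu_ker b]
    have hP : (Matrix.of fun a b => B (u a) (u b)).det ≠ 0 := by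
      have hfac : (Matrix.of (fun a b => B (u a) (u b)) : Matrix (Fin ρ) (Fin ρ) ℂ) =
          (-mu⁻¹) • (Matrix.of fun a b => A (u a) (u b)) := by
        ext a b
        have h := hu_rel a (u b)
        simp only [Matrix.smul_apply, Matrix.of_apply, smul_eq_mul]
        field_simp
        linear_combination h
      rw [hfac, Matrix.det_smul]
      apply mul_ne_zero
      · exact pow_ne_zero _ (neg_ne_zero.mpr (inv_ne_zero hmu))
      · have hAA : (Matrix.of (fun a b => A (u a) (u b)) : Matrix (Fin ρ) (Fin ρ) ℂ) =
            (Matrix.of fun i j => AK (uv i) (uv j)) := by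
          ext a b
          simp only [Matrix.of_apply]
          exact (hAK_apply _ _).symm
        rw [hAA]
        exact huv
    rw [hform, Matrix.det_fromBlocks_zero₂₁]
    exact mul_ne_zero hP hwv
  -- polynomial matrix
  set Np : Matrix (Fin ρ ⊕ Fin wd) (Fin ρ ⊕ Fin wd) ℂ[X] :=
    Matrix.of fun i j => Polynomial.C (CC i j) + Polynomial.X * Polynomial.C (BB i j) with hNp
  have heval : ∀ t : ℂ, Np.map (Polynomial.evalRingHom t) = Nt t := by
    intro t
    ext i j
    simp only [hNp, hNt, Matrix.map_apply, Matrix.of_apply, Polynomial.coe_evalRingHom,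
      Polynomial.eval_add, Polynomial.eval_mul, Polynomial.eval_C, Polynomial.eval_X]
  have hdet_eval : ∀ t : ℂ, (Nt t).det = Polynomial.eval t Np.det := by
    intro t
    have h := (Polynomial.evalRingHom t).map_det Np
    rw [RingHom.mapMatrix_apply, heval t] at h
    rw [← h]
    rfl
  have hNp_ne : Np.det ≠ 0 := by
    intro hcon
    apply h0
    rw [hdet_eval 0, hcon, Polynomial.eval_zero]
  obtain ⟨t₀, ht₀⟩ : ∃ t : ℂ, Polynomial.eval t (Polynomial.X * Np.det) ≠ 0 := by
    by_contra hcon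
    push_neg at hcon
    have hz : (Polynomial.X * Np.det : ℂ[X]) = 0 :=
      Polynomial.funext fun t => by simpa using hcon t
    exact (mul_ne_zero Polynomial.X_ne_zero hNp_ne) hz
  rw [Polynomial.eval_mul, Polynomial.eval_X] at ht₀
  have ht₀0 : t₀ ≠ 0 := fun h => ht₀ (by rw [h, zero_mul])
  have hdet_t₀ : (Nt t₀).det ≠ 0 := by
    rw [hdet_eval t₀]
    exact fun h => ht₀ (by rw [h, mul_zero])
  -- the Gram matrix of A + (mu + t₀) • B
  have hMform : (Matrix.of fun i j => (A + (mu + t₀) • B) (x i) (x j)) =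
      Matrix.diagonal (Sum.elim (fun _ : Fin ρ => t₀) (fun _ : Fin wd => (1 : ℂ))) * Nt t₀ := by
    ext i j
    rw [Matrix.diagonal_mul]
    rcases i with a | a
    · have hxa : x (Sum.inl a) = u a := rfl
      simp only [Matrix.of_apply, LinearMap.add_apply, LinearMap.smul_apply, smul_eq_mul,
        hNt, hCC, hBB, Sum.elim_inl, hxa]
      linear_combination hu_rel a (x j)
    · have hxa : x (Sum.inr a) = wv a := rfl
      simp only [Matrix.of_apply, LinearMap.add_apply, LinearMap.smul_apply, smul_eq_mul,
        hNt, hCC, hBB, Sum.elim_inr, hxa]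
      rw [hCb_apply]
      ring
  have hdetM : (Matrix.of fun i j => (A + (mu + t₀) • B) (x i) (x j)).det ≠ 0 := by
    rw [hMform, Matrix.det_mul, Matrix.det_diagonal]
    apply mul_ne_zero
    · rw [Fintype.prod_sum_type]
      simp only [Sum.elim_inl, Sum.elim_inr, Finset.prod_const, one_pow, mul_one]
      exact pow_ne_zero _ ht₀0
    · exact hdet_t₀
  have hmain : ρ + wd ≤ r := by
    have h := gram_le_formRank (A + (mu + t₀) • B) x x hdetM
    have h2 := hr_le (mu + t₀)
    simp only [Fintype.card_sum, Fintype.card_fin] at h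
    omega
  -- final arithmetic
  have hρdef : ρ = Module.finrank ℂ K - Module.finrank ℂ (LinearMap.ker AK) := rfl
  have hkerle : Module.finrank ℂ (LinearMap.ker AK) ≤ Module.finrank ℂ K :=
    Submodule.finrank_le _
  have hwdef : wd = n - Module.finrank ℂ K := rfl
  have hkn : Module.finrank ℂ K ≤ n := Submodule.finrank_le _
  have hwr : wd ≤ r := hr_le mu
  rw [Nat.even_iff] at hr_even hw_even hρ_even
  refine ⟨by omega, by omega, ?_, ?_⟩
  · rw [Nat.even_iff]; omega
  · rw [Nat.even_iff]; omega
end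

section
/- Index of the annihilator: let g be a finite-dimensional complex Lie algebra and a ∈ g*. Then Ann a = {ξ ∈ g : a(⁅ξ,η⁆) = 0 for all η ∈ g} is a Lie subalgebra of g, and ind(Ann a) ≥ ind g. -/
attribute [local instance] LieRing.ofAssociativeRing

/-- For `x ∈ g*`, the alternating bilinear form `𝒜_x (ξ, η) = x ⁅ξ, η⁆` on `g`. -/
noncomputable def coadjForm (R : Type*) (L : Type*) [CommRing R] [LieRing L] [LieAlgebra R L]
    (x : Module.Dual R L) : L →ₗ[R] L →ₗ[R] R :=
  (LinearMap.llcomp R L L R x).comp (LieAlgebra.ad R L).toLinearMap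

/-- The index of a Lie algebra: `ind h = min_{β ∈ h*} dim {ζ ∈ h : β ⁅ζ, θ⁆ = 0 ∀ θ}`. -/
noncomputable def lieIndex (R : Type*) (L : Type*) [CommRing R] [LieRing L] [LieAlgebra R L] :
    ℕ :=
  sInf (Set.range fun x : Module.Dual R L =>
    Module.finrank R (LinearMap.ker (coadjForm R L x)))

open Matrix Polynomial

lemma coadjForm_apply {R L : Type*} [CommRing R] [LieRing L] [LieAlgebra R L]
    (x : Module.Dual R L) (ξ η : L) : coadjForm R L x ξ η = x ⁅ξ, η⁆ := rfl

/-- the Gram matrix of an alternating form on a complement of its kernel is invertible -/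
lemma gram_det_ne_zero {K V : Type*} [Field K] [AddCommGroup V] [Module K V]
    (C : V →ₗ[K] V →ₗ[K] K) (halt : ∀ z, C z z = 0)
    {U : Submodule K V} (hU : IsCompl (LinearMap.ker C) U)
    {m : ℕ} (e : Module.Basis (Fin m) K U) :
    (Matrix.of fun i j : Fin m => C (e i) (e j)).det ≠ 0 := by
  have skew : ∀ z y : V, C z y = - C y z := by
    intro z y
    have h := halt (z + y)
    simp only [map_add, LinearMap.add_apply, halt] at h
    linear_combination h
  intro hdet
  obtain ⟨c, hc0, hc⟩ := Matrix.exists_vecMul_eq_zero_iff.mpr hdet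
  set u0 : U := ∑ i, c i • e i with hu0
  have key0 : ∀ j, C (u0 : V) ((e j : U) : V) = 0 := by
    intro j
    have := congrFun hc j
    simp only [Matrix.vecMul, dotProduct, Matrix.of_apply, Pi.zero_apply] at this
    rw [hu0]
    push_cast [Submodule.coe_sum]
    rw [map_sum]
    simpa [LinearMap.sum_apply, LinearMap.map_smul, smul_eq_mul] using this
  have keyU : ∀ zu : U, C (u0 : V) (zu : V) = 0 := by
    intro zu
    have hrep := e.sum_repr zu
    rw [← hrep]
    push_cast [Submodule.coe_sum]
    rw [map_sum]
    simp only [SetLike.val_smul, _root_.map_smul, smul_eq_mul]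
    exact Finset.sum_eq_zero fun j _ => by rw [key0 j, mul_zero]
  have key : C (u0 : V) = 0 := by
    apply LinearMap.ext
    intro z
    have hz : z ∈ LinearMap.ker C ⊔ U := by
      rw [hU.sup_eq_top]; trivial
    obtain ⟨zk, hzk, zu, hzu, rfl⟩ := Submodule.mem_sup.mp hz
    have h1 : C (u0 : V) zk = 0 := by
      rw [skew]
      have : C zk = 0 := hzk
      rw [this]; simp
    rw [map_add, h1, keyU ⟨zu, hzu⟩, add_zero]; rfl
  have hmem : (u0 : V) ∈ LinearMap.ker C ⊓ U := by
    exact ⟨key, u0.2⟩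
  rw [hU.inf_eq_bot, Submodule.mem_bot] at hmem
  have : u0 = 0 := Subtype.ext hmem
  have hci : ∀ i, c i = 0 := by
    have := Fintype.linearIndependent_iff.mp e.linearIndependent c (by rw [← hu0, this])
    exact this
  exact hc0 (funext hci)

/-- if the Gram matrix of C on families v, w is invertible, the kernel of C is small -/
lemma finrank_ker_le_of_gram {K V ι : Type*} [Field K] [AddCommGroup V] [Module K V]
    [FiniteDimensional K V] [Fintype ι] [DecidableEq ι]
    (C : V →ₗ[K] V →ₗ[K] K) (v w : ι → V)
    (hdet : (Matrix.of fun i j : ι => C (v i) (w j)).det ≠ 0) :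
    Module.finrank K (LinearMap.ker C) + Fintype.card ι ≤ Module.finrank K V := by
  classical
  set M : Matrix ι ι K := Matrix.of fun i j : ι => C (v i) (w j) with hM
  set P : (V →ₗ[K] K) →ₗ[K] (ι → K) := LinearMap.pi fun j => LinearMap.applyₗ (w j) with hP
  set D : V →ₗ[K] (ι → K) := P ∘ₗ C with hD
  have hsurj : Function.Surjective D := by
    intro y
    have hdetT : Mᵀ.det ≠ 0 := by rwa [Matrix.det_transpose]
    have hunit : IsUnit Mᵀ := (Matrix.isUnit_iff_isUnit_det _).mpr hdetT.isUnit
    obtain ⟨c, hcy⟩ := Matrix.mulVec_surjective_iff_isUnit.mpr hunit y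
    refine ⟨∑ i, c i • v i, ?_⟩
    funext j
    have : D (∑ i, c i • v i) j = ∑ i, c i * C (v i) (w j) := by
      simp [hD, hP, LinearMap.pi_apply, map_sum, LinearMap.sum_apply, mul_comm]
    rw [this, ← congrFun hcy j]
    simp [Matrix.mulVec, dotProduct, hM, mul_comm]
  have h1 : Module.finrank K (LinearMap.range D) = Fintype.card ι := by
    rw [LinearMap.range_eq_top.mpr hsurj, finrank_top, Module.finrank_pi]
  have h2 : LinearMap.range D = Submodule.map P (LinearMap.range C) := by
    rw [hD, LinearMap.range_comp]
  have h3 : Module.finrank K (LinearMap.range D) ≤ Module.finrank K (LinearMap.range C) := by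
    rw [h2]; exact Submodule.finrank_map_le P _
  have h4 := LinearMap.finrank_range_add_finrank_ker C
  omega

lemma exists_good_t {p r : ℕ} (Auu Buu : Matrix (Fin p) (Fin p) ℂ)
    (Buw : Matrix (Fin p) (Fin r) ℂ) (Bwu : Matrix (Fin r) (Fin p) ℂ)
    (Bww : Matrix (Fin r) (Fin r) ℂ) (hA : Auu.det ≠ 0) (hB : Bww.det ≠ 0) :
    ∃ t : ℂ, (Matrix.fromBlocks (Auu + t • Buu) (t • Buw) (t • Bwu) (t • Bww)).det ≠ 0 := by
  classical
  set N : Matrix (Fin p ⊕ Fin r) (Fin p ⊕ Fin r) ℂ[X] :=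
    Matrix.fromBlocks (Auu.map C + (X : ℂ[X]) • Buu.map C) (Buw.map C) ((X : ℂ[X]) • Bwu.map C) (Bww.map C) with hN
  set M : Matrix (Fin p ⊕ Fin r) (Fin p ⊕ Fin r) ℂ[X] :=
    Matrix.fromBlocks (Auu.map C + (X : ℂ[X]) • Buu.map C) ((X : ℂ[X]) • Buw.map C) ((X : ℂ[X]) • Bwu.map C)
      ((X : ℂ[X]) • Bww.map C) with hM
  have hfact : M = N * Matrix.fromBlocks 1 0 0 ((X : ℂ[X]) • (1 : Matrix (Fin r) (Fin r) ℂ[X])) := by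
    rw [hN, hM, Matrix.fromBlocks_multiply]
    congr 1 <;> simp [Matrix.mul_smul]
  have hNdet : N.det ≠ 0 := by
    intro h0
    have heval : (Polynomial.evalRingHom (0 : ℂ)) N.det =
        (N.map (Polynomial.evalRingHom (0 : ℂ))).det := RingHom.map_det _ _
    have hN0 : N.map (Polynomial.evalRingHom (0 : ℂ)) =
        Matrix.fromBlocks Auu Buw 0 Bww := by
      rw [hN, Matrix.fromBlocks_map]
      rw [Matrix.fromBlocks_inj]
      refine ⟨?_, ?_, ?_, ?_⟩
      · ext i j; simp [Matrix.map_apply, Matrix.add_apply, Matrix.smul_apply, smul_eq_mul]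
      · ext i j; simp [Matrix.map_apply]
      · ext i j; simp [Matrix.map_apply, Matrix.smul_apply, smul_eq_mul]
      · ext i j; simp [Matrix.map_apply]
    rw [h0, map_zero] at heval
    rw [hN0, Matrix.det_fromBlocks_zero₂₁] at heval
    exact (mul_ne_zero hA hB) heval.symm
  have hMdet : M.det ≠ 0 := by
    rw [hfact, Matrix.det_mul, Matrix.det_fromBlocks_zero₂₁, Matrix.det_one, one_mul,
      Matrix.det_smul, Matrix.det_one, mul_one]
    exact mul_ne_zero hNdet (pow_ne_zero _ (X_ne_zero (R := ℂ)))
  have : ∃ t : ℂ, M.det.eval t ≠ 0 := by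
    by_contra hcon
    push_neg at hcon
    exact hMdet (Polynomial.zero_of_eval_zero _ hcon)
  obtain ⟨t, ht⟩ := this
  refine ⟨t, ?_⟩
  have heval : (Polynomial.evalRingHom t) M.det =
      (M.map (Polynomial.evalRingHom t)).det := RingHom.map_det _ _
  have hMt : M.map (Polynomial.evalRingHom t) =
      Matrix.fromBlocks (Auu + t • Buu) (t • Buw) (t • Bwu) (t • Bww) := by
    rw [hM, Matrix.fromBlocks_map]
    rw [Matrix.fromBlocks_inj]
    refine ⟨?_, ?_, ?_, ?_⟩
    · ext i j; simp [Matrix.map_apply, Matrix.add_apply, Matrix.smul_apply, smul_eq_mul]; try ring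
    · ext i j; simp [Matrix.map_apply, Matrix.smul_apply, smul_eq_mul]; try ring
    · ext i j; simp [Matrix.map_apply, Matrix.smul_apply, smul_eq_mul]; try ring
    · ext i j; simp [Matrix.map_apply, Matrix.smul_apply, smul_eq_mul]; try ring
  rw [← hMt, ← heval]
  exact ht

lemma alt_skew {K V : Type*} [Field K] [AddCommGroup V] [Module K V]
    (C : V →ₗ[K] V →ₗ[K] K) (halt : ∀ z, C z z = 0) (z y : V) : C z y = - C y z := by
  have h := halt (z + y)
  simp only [map_add, LinearMap.add_apply, halt] at h
  linear_combination h

/-- the annihilator of `a ∈ g*` as a Lie subalgebra -/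
noncomputable def annSubalg (g : Type*) [LieRing g] [LieAlgebra ℂ g]
    (a : Module.Dual ℂ g) : LieSubalgebra ℂ g where
  toSubmodule := LinearMap.ker (coadjForm ℂ g a)
  lie_mem' := by
    intro x y hx hy
    have hx' : coadjForm ℂ g a x = 0 := hx
    have hy' : coadjForm ℂ g a y = 0 := hy
    refine LinearMap.mem_ker.mpr (LinearMap.ext fun z => ?_)
    have h1 : a ⁅x, ⁅y, z⁆⁆ = 0 := by
      simpa [coadjForm_apply] using LinearMap.congr_fun hx' ⁅y, z⁆
    have h2 : a ⁅y, ⁅x, z⁆⁆ = 0 := by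
      simpa [coadjForm_apply] using LinearMap.congr_fun hy' ⁅x, z⁆
    show coadjForm ℂ g a ⁅x, y⁆ z = 0
    rw [coadjForm_apply, lie_lie, map_sub, h1, h2, sub_zero]

/-- For a finite-dimensional complex Lie algebra `g` and `a ∈ g*`, the annihilator
`Ann a = {ξ ∈ g : a ⁅ξ, η⁆ = 0 for all η ∈ g}` is a Lie subalgebra of `g`, and its index
satisfies `ind (Ann a) ≥ ind g`. -/
theorem lieIndex_annihilator_ge
    (g : Type*) [LieRing g] [LieAlgebra ℂ g] [FiniteDimensional ℂ g]
    (a : Module.Dual ℂ g) :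
    ∃ h : LieSubalgebra ℂ g,
      (h : Set g) = {ξ : g | ∀ η : g, a ⁅ξ, η⁆ = 0} ∧
      lieIndex ℂ g ≤ lieIndex ℂ h := by
  classical
  set A := coadjForm ℂ g a with hA
  set h := annSubalg g a with hh
  have hmemh : ∀ z : g, z ∈ h ↔ A z = 0 := by
    intro z; rw [hh]; exact LinearMap.mem_ker (f := A)
  refine ⟨h, ?_, ?_⟩
  · ext ξ
    simp only [Set.mem_setOf_eq, SetLike.mem_coe, hmemh]
    constructor
    · intro hξ η
      simpa [hA, coadjForm_apply] using LinearMap.congr_fun hξ η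
    · intro hξ
      apply LinearMap.ext
      intro η
      simpa [hA, coadjForm_apply] using hξ η
  · refine le_csInf ⟨_, ⟨0, rfl⟩⟩ ?_
    rintro n ⟨β, rfl⟩
    haveI : FiniteDimensional ℂ ↥h :=
      inferInstanceAs (FiniteDimensional ℂ ↥(LinearMap.ker A))
    set b : Module.Dual ℂ g := Subspace.dualLift h.toSubmodule β with hb
    set B := coadjForm ℂ g b with hB
    set Bβ := coadjForm ℂ ↥h β with hBβ
    obtain ⟨U, hU⟩ := Submodule.exists_isCompl (LinearMap.ker A)
    obtain ⟨W, hW⟩ := Submodule.exists_isCompl (LinearMap.ker Bβ)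
    set p := Module.finrank ℂ U with hp
    set r := Module.finrank ℂ W with hr
    let eU : Module.Basis (Fin p) ℂ U := Module.finBasis ℂ U
    let eW : Module.Basis (Fin r) ℂ W := Module.finBasis ℂ W
    set u : Fin p → g := fun i => ((eU i : U) : g) with hu
    set w : Fin r → g := fun j => (((eW j : W) : ↥h) : g) with hw
    have haltA : ∀ z : g, A z z = 0 := fun z => by
      rw [hA, coadjForm_apply, lie_self, map_zero]
    have haltB : ∀ z : g, B z z = 0 := fun z => by
      rw [hB, coadjForm_apply, lie_self, map_zero]
    have haltβ : ∀ z : ↥h, Bβ z z = 0 := fun z => by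
      rw [hBβ, coadjForm_apply, lie_self, map_zero]
    have detA : (Matrix.of fun i j : Fin p => A (u i) (u j)).det ≠ 0 :=
      gram_det_ne_zero A haltA hU eU
    have detBβ : (Matrix.of fun i j : Fin r => Bβ (eW i) (eW j)).det ≠ 0 :=
      gram_det_ne_zero Bβ haltβ hW eW
    have hbh : ∀ ξ η : ↥h, B (ξ : g) (η : g) = Bβ ξ η := by
      intro ξ η
      rw [hB, hBβ, coadjForm_apply, coadjForm_apply, ← LieSubalgebra.coe_bracket]
      exact Subspace.dualLift_of_subtype _
    have detB : (Matrix.of fun i j : Fin r => B (w i) (w j)).det ≠ 0 := by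
      have heq : (Matrix.of fun i j : Fin r => B (w i) (w j)) =
          Matrix.of fun i j : Fin r => Bβ (eW i) (eW j) := by
        ext i j
        exact hbh _ _
      rw [heq]; exact detBβ
    obtain ⟨t, hdet⟩ := exists_good_t
      (Matrix.of fun i j => A (u i) (u j)) (Matrix.of fun i j => B (u i) (u j))
      (Matrix.of fun i j => B (u i) (w j)) (Matrix.of fun i j => B (w i) (u j))
      (Matrix.of fun i j => B (w i) (w j)) detA detB
    set x := a + t • b with hx
    set Ct := coadjForm ℂ g x with hCt
    have hCtapp : ∀ z y : g, Ct z y = A z y + t * B z y := by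
      intro z y
      rw [hCt, hA, hB, coadjForm_apply, coadjForm_apply, coadjForm_apply, hx]
      simp
    have hwker : ∀ j, A (w j) = 0 := by
      intro j
      have : w j ∈ h := ((eW j : W) : ↥h).2
      exact (hmemh _).mp this
    have hgram : (Matrix.of fun i j : Fin p ⊕ Fin r =>
        Ct (Sum.elim u w i) (Sum.elim u w j)) =
        Matrix.fromBlocks
          ((Matrix.of fun i j => A (u i) (u j)) + t • (Matrix.of fun i j => B (u i) (u j)))
          (t • (Matrix.of fun i j => B (u i) (w j)))
          (t • (Matrix.of fun i j => B (w i) (u j)))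
          (t • (Matrix.of fun i j => B (w i) (w j))) := by
      ext i j
      rcases i with i | i <;> rcases j with j | j
      · simp only [Matrix.of_apply, Sum.elim_inl, Matrix.fromBlocks_apply₁₁,
          Matrix.add_apply, Matrix.smul_apply, Matrix.of_apply, smul_eq_mul]
        rw [hCtapp]
      · simp only [Matrix.of_apply, Sum.elim_inl, Sum.elim_inr, Matrix.fromBlocks_apply₁₂,
          Matrix.smul_apply, Matrix.of_apply, smul_eq_mul]
        rw [hCtapp]
        rw [alt_skew A haltA, hwker]
        simp
      · simp only [Matrix.of_apply, Sum.elim_inl, Sum.elim_inr, Matrix.fromBlocks_apply₂₁,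
          Matrix.smul_apply, Matrix.of_apply, smul_eq_mul]
        rw [hCtapp, hwker]
        simp
      · simp only [Matrix.of_apply, Sum.elim_inr, Matrix.fromBlocks_apply₂₂,
          Matrix.smul_apply, Matrix.of_apply, smul_eq_mul]
        rw [hCtapp, hwker]
        simp
    have hkey := finrank_ker_le_of_gram Ct (Sum.elim u w) (Sum.elim u w)
      (by rw [hgram]; exact hdet)
    rw [Fintype.card_sum, Fintype.card_fin, Fintype.card_fin] at hkey
    have e1 : Module.finrank ℂ ↥(LinearMap.ker A) + p = Module.finrank ℂ g :=
      Submodule.finrank_add_eq_of_isCompl hU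
    have e2 : Module.finrank ℂ ↥(LinearMap.ker Bβ) + r = Module.finrank ℂ ↥h :=
      Submodule.finrank_add_eq_of_isCompl hW
    have e3 : Module.finrank ℂ ↥h = Module.finrank ℂ ↥(LinearMap.ker A) := rfl
    have final : Module.finrank ℂ (LinearMap.ker Ct) ≤
        Module.finrank ℂ (LinearMap.ker Bβ) := by omega
    exact le_trans (Nat.sInf_le ⟨x, rfl⟩) final
end

section
/- Singular set of gl(n) ⋉ Mat_n: let g be the Lie algebra Mat_n(ℂ) × Mat_n(ℂ) with bracket ⁅(X₁,Y₁),(X₂,Y₂)⁆ = (X₁X₂ − X₂X₁, X₁Y₂ − X₂Y₁) (the semidirect sum of gl(n,ℂ) with the space of n×n matrices under left multiplication). For A, C ∈ Mat_n(ℂ), let 𝒜_{(A,C)} be the alternating bilinear form on g given by 𝒜_{(A,C)}((X₁,Y₁),(X₂,Y₂)) = Tr(A(X₁X₂ − X₂X₁)) + Tr(C(X₁Y₂ − X₂Y₁)). Then 𝒜_{(A,C)} is nondegenerate if and only if det C ≠ 0. In particular, g is a Frobenius Lie algebra. -/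
open Matrix

/-- The alternating bilinear form `𝒜_{(A,C)}` on the Lie algebra
`g = Mat_n(ℂ) × Mat_n(ℂ)` (the semidirect sum of `gl(n, ℂ)` with the space of `n × n`
matrices under left multiplication, with bracket
`⁅(X₁,Y₁),(X₂,Y₂)⁆ = (X₁X₂ − X₂X₁, X₁Y₂ − X₂Y₁)`), given by
`𝒜_{(A,C)}((X₁,Y₁),(X₂,Y₂)) = Tr(A(X₁X₂ − X₂X₁)) + Tr(C(X₁Y₂ − X₂Y₁))`. -/
noncomputable def glMatForm (n : ℕ) (A C : Matrix (Fin n) (Fin n) ℂ)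
    (p q : Matrix (Fin n) (Fin n) ℂ × Matrix (Fin n) (Fin n) ℂ) : ℂ :=
  (A * (p.1 * q.1 - q.1 * p.1)).trace + (C * (p.1 * q.2 - q.1 * p.2)).trace

/-- If `Tr(M X) = 0` for all `X`, then `M = 0`. -/
lemma aux_trace_all_zero {n : ℕ} (M : Matrix (Fin n) (Fin n) ℂ)
    (h : ∀ X : Matrix (Fin n) (Fin n) ℂ, (M * X).trace = 0) : M = 0 := by
  ext i j
  have := h (Matrix.single j i 1)
  simpa [Matrix.trace, Matrix.mul_apply, Matrix.single, Matrix.diag, ite_and,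
    Finset.sum_ite_eq, Finset.sum_ite_eq'] using this

lemma aux_main (n : ℕ) (A C : Matrix (Fin n) (Fin n) ℂ) :
    (∀ p : Matrix (Fin n) (Fin n) ℂ × Matrix (Fin n) (Fin n) ℂ,
        (∀ q : Matrix (Fin n) (Fin n) ℂ × Matrix (Fin n) (Fin n) ℂ,
          glMatForm n A C p q = 0) → p = 0) ↔ C.det ≠ 0 := by
  constructor
  · intro hnd
    by_contra hdet
    have hdetT : Cᵀ.det = 0 := by rwa [Matrix.det_transpose]
    obtain ⟨v, hv, hvC⟩ := (Matrix.exists_mulVec_eq_zero_iff).mpr hdetT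
    set Y₁ : Matrix (Fin n) (Fin n) ℂ := Matrix.of fun _ j => v j with hY₁
    have hYC : Y₁ * C = 0 := by
      ext i k
      have := congrFun hvC k
      simpa [Matrix.mul_apply, Matrix.mulVec, dotProduct, hY₁,
        mul_comm] using this
    have hp0 : (0, Y₁) = (0 : Matrix (Fin n) (Fin n) ℂ × Matrix (Fin n) (Fin n) ℂ) := by
      apply hnd
      intro q
      have h3 : (C * (q.1 * Y₁)).trace = 0 := by
        rw [← Matrix.mul_assoc, Matrix.trace_mul_cycle, hYC, Matrix.zero_mul,
          Matrix.trace_zero]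
      simp [glMatForm, zero_sub, Matrix.mul_neg, h3]
    apply hv
    funext j
    obtain ⟨j0, hj0⟩ := Function.ne_iff.mp hv
    have := congrFun (congrFun (congrArg Prod.snd hp0) j0) j
    simpa [hY₁] using this
  · intro hdet p hp
    have hC : IsUnit C.det := isUnit_iff_ne_zero.mpr hdet
    have hX : C * p.1 = 0 := by
      apply aux_trace_all_zero
      intro X
      have := hp (0, X)
      simpa [glMatForm, Matrix.mul_assoc] using this
    have hX0 : p.1 = 0 := by
      have := congrArg (fun M => C⁻¹ * M) hX
      simpa [← Matrix.mul_assoc, Matrix.nonsing_inv_mul C hC] using this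
    have hY : p.2 * C = 0 := by
      have h' : ∀ X, ((p.2 * C) * X).trace = 0 := by
        intro X
        have := hp (X, 0)
        have h2 : (C * (X * p.2)).trace = 0 := by
          simpa [glMatForm, hX0, Matrix.mul_assoc] using this
        rw [← Matrix.mul_assoc, Matrix.trace_mul_cycle] at h2
        exact h2
      exact aux_trace_all_zero _ h'
    have hY0 : p.2 = 0 := by
      have := congrArg (fun M => M * C⁻¹) hY
      simpa [Matrix.mul_assoc, Matrix.mul_nonsing_inv C hC] using this
    exact Prod.ext hX0 hY0

/-- **Singular set of `gl(n) ⋉ Mat_n`.** The form `𝒜_{(A,C)}` is nondegenerate if and only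
if `det C ≠ 0`. In particular (second conjunct) such a pair `(A, C)` exists, i.e. the Lie
algebra `gl(n) ⋉ Mat_n` is Frobenius. -/
theorem glMatForm_nondegenerate_iff (n : ℕ) :
    (∀ A C : Matrix (Fin n) (Fin n) ℂ,
      (∀ p : Matrix (Fin n) (Fin n) ℂ × Matrix (Fin n) (Fin n) ℂ,
          (∀ q : Matrix (Fin n) (Fin n) ℂ × Matrix (Fin n) (Fin n) ℂ,
            glMatForm n A C p q = 0) → p = 0) ↔
        C.det ≠ 0) ∧
    (∃ A C : Matrix (Fin n) (Fin n) ℂ,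
      ∀ p : Matrix (Fin n) (Fin n) ℂ × Matrix (Fin n) (Fin n) ℂ,
        (∀ q : Matrix (Fin n) (Fin n) ℂ × Matrix (Fin n) (Fin n) ℂ,
          glMatForm n A C p q = 0) → p = 0) := by
  refine ⟨aux_main n, 0, 1, (aux_main n 0 1).mpr (by simp)⟩
end
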